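/- arXiv:2102.11166 — 12 statements merged into one kernel-verified Lean document; each statement's English description precedes it below -/
import Mathlib

section
/- The axiom RSP1 is sound for ready simulation equivalence: for all actions a, b and processes x, y, u, z, w, v, the process (a.x + a.y + u) ‖ (b.z + b.w + v) is ready simulation equivalent to (a.x + u) ‖ (b.z + b.w + v) + (a.y + u) ‖ (b.z + b.w + v) + (a.x + a.y + u) ‖ (b.z + v) + (a.x + a.y + u) ‖ (b.w + v). -/
inductive Proc (A : Type) : Type where
  | nil : Proc A
  | pre : A → Proc A → Proc A
  | add : Proc A → Proc A → Proc A
  | par : Proc A → Proc A → Proc A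

inductive Step {A : Type} : Proc A → A → Proc A → Prop where
  | pre (a : A) (p : Proc A) : Step (.pre a p) a p
  | addL {p : Proc A} {a : A} {p' : Proc A} (q : Proc A) :
      Step p a p' → Step (.add p q) a p'
  | addR {q : Proc A} {a : A} {q' : Proc A} (p : Proc A) :
      Step q a q' → Step (.add p q) a q'
  | parL {p : Proc A} {a : A} {p' : Proc A} (q : Proc A) :
      Step p a p' → Step (.par p q) a (.par p' q)
  | parR {q : Proc A} {a : A} {q' : Proc A} (p : Proc A) :
      Step q a q' → Step (.par p q) a (.par p q')

inductive TraceTo {A : Type} : Proc A → List A → Proc A → Prop where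
  | refl (p : Proc A) : TraceTo p [] p
  | step {p : Proc A} {a : A} {p' : Proc A} {α : List A} {q : Proc A} :
      Step p a p' → TraceTo p' α q → TraceTo p (a :: α) q

def traces {A : Type} (p : Proc A) : Set (List A) := {α | ∃ q, TraceTo p α q}

def stuck {A : Type} (p : Proc A) : Prop := ∀ (a : A) (q : Proc A), ¬ Step p a q

def ctraces {A : Type} (p : Proc A) : Set (List A) :=
  {α | ∃ q, TraceTo p α q ∧ stuck q}

def initials {A : Type} (p : Proc A) : Set A := {a | ∃ p', Step p a p'}

def IsSimulation {A : Type} (R : Proc A → Proc A → Prop) : Prop :=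
  ∀ p q, R p q → ∀ (a : A) (p' : Proc A), Step p a p' → ∃ q', Step q a q' ∧ R p' q'

def SimEquiv {A : Type} (p q : Proc A) : Prop :=
  (∃ R, IsSimulation R ∧ R p q) ∧ (∃ R, IsSimulation R ∧ R q p)

def IsReadySimulation {A : Type} (R : Proc A → Proc A → Prop) : Prop :=
  IsSimulation R ∧ ∀ p q, R p q → initials p = initials q

def RSEquiv {A : Type} (p q : Proc A) : Prop :=
  (∃ R, IsReadySimulation R ∧ R p q) ∧ (∃ R, IsReadySimulation R ∧ R q p)

def IsCompletedSimulation {A : Type} (R : Proc A → Proc A → Prop) : Prop :=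
  IsSimulation R ∧ ∀ p q, R p q → stuck p → stuck q

def CSEquiv {A : Type} (p q : Proc A) : Prop :=
  (∃ R, IsCompletedSimulation R ∧ R p q) ∧ (∃ R, IsCompletedSimulation R ∧ R q p)

def Bisim {A : Type} (p q : Proc A) : Prop :=
  ∃ R, (∀ x y, R x y → R y x) ∧ IsSimulation R ∧ R p q

noncomputable def depth {A : Type} (p : Proc A) : ℕ :=
  sSup (List.length '' ctraces p)

noncomputable def norm {A : Type} (p : Proc A) : ℕ :=
  sInf (List.length '' ctraces p)

lemma initials_pre {A : Type} (a : A) (p : Proc A) :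
    initials (Proc.pre a p) = {a} := by
  ext c; constructor
  · rintro ⟨p', h⟩; cases h; rfl
  · rintro rfl; exact ⟨p, Step.pre _ p⟩

lemma initials_add {A : Type} (p q : Proc A) :
    initials (Proc.add p q) = initials p ∪ initials q := by
  ext c; constructor
  · rintro ⟨p', h⟩
    cases h with
    | addL _ h => exact Or.inl ⟨_, h⟩
    | addR _ h => exact Or.inr ⟨_, h⟩
  · rintro (⟨p', h⟩ | ⟨q', h⟩)
    · exact ⟨_, Step.addL _ h⟩
    · exact ⟨_, Step.addR _ h⟩

lemma initials_par {A : Type} (p q : Proc A) :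
    initials (Proc.par p q) = initials p ∪ initials q := by
  ext c; constructor
  · rintro ⟨p', h⟩
    cases h with
    | parL _ h => exact Or.inl ⟨_, h⟩
    | parR _ h => exact Or.inr ⟨_, h⟩
  · rintro (⟨p', h⟩ | ⟨q', h⟩)
    · exact ⟨_, Step.parL _ h⟩
    · exact ⟨_, Step.parR _ h⟩

lemma split3 {A : Type} {a b : A} {x y u : Proc A} {c : A} {p' : Proc A}
    (h : Step (Proc.add (Proc.add (Proc.pre a x) (Proc.pre b y)) u) c p') :
    Step (Proc.add (Proc.pre a x) u) c p' ∨ Step (Proc.add (Proc.pre b y) u) c p' := by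
  cases h with
  | addL _ h =>
    cases h with
    | addL _ h => exact Or.inl (Step.addL _ h)
    | addR _ h => exact Or.inr (Step.addL _ h)
  | addR _ h => exact Or.inl (Step.addR _ h)

lemma liftL {A : Type} {a b : A} {x y u : Proc A} {c : A} {p' : Proc A}
    (h : Step (Proc.add (Proc.pre a x) u) c p') :
    Step (Proc.add (Proc.add (Proc.pre a x) (Proc.pre b y)) u) c p' := by
  cases h with
  | addL _ h => exact Step.addL _ (Step.addL _ h)
  | addR _ h => exact Step.addR _ h

lemma liftR {A : Type} {a b : A} {x y u : Proc A} {c : A} {p' : Proc A}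
    (h : Step (Proc.add (Proc.pre b y) u) c p') :
    Step (Proc.add (Proc.add (Proc.pre a x) (Proc.pre b y)) u) c p' := by
  cases h with
  | addL _ h => exact Step.addL _ (Step.addR _ h)
  | addR _ h => exact Step.addR _ h

theorem RSP1_sound {A : Type} [Fintype A] [Nonempty A]
    (a b : A) (x y u z w v : Proc A) :
    RSEquiv
      (Proc.par (Proc.add (Proc.add (Proc.pre a x) (Proc.pre a y)) u)
                (Proc.add (Proc.add (Proc.pre b z) (Proc.pre b w)) v))
      (Proc.add (Proc.add (Proc.add
        (Proc.par (Proc.add (Proc.pre a x) u)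
                  (Proc.add (Proc.add (Proc.pre b z) (Proc.pre b w)) v))
        (Proc.par (Proc.add (Proc.pre a y) u)
                  (Proc.add (Proc.add (Proc.pre b z) (Proc.pre b w)) v)))
        (Proc.par (Proc.add (Proc.add (Proc.pre a x) (Proc.pre a y)) u)
                  (Proc.add (Proc.pre b z) v)))
        (Proc.par (Proc.add (Proc.add (Proc.pre a x) (Proc.pre a y)) u)
                  (Proc.add (Proc.pre b w) v))) := by

  constructor
  · -- forward
    refine ⟨fun r s => (r = _ ∧ s = _) ∨ r = s, ⟨?_, ?_⟩, Or.inl ⟨rfl, rfl⟩⟩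
    · rintro p q (⟨rfl, rfl⟩ | rfl) c p' hs
      · cases hs with
        | parL _ h =>
          rcases split3 h with h | h
          · exact ⟨_, Step.addL _ (Step.addL _ (Step.addL _ (Step.parL _ h))), Or.inr rfl⟩
          · exact ⟨_, Step.addL _ (Step.addL _ (Step.addR _ (Step.parL _ h))), Or.inr rfl⟩
        | parR _ h =>
          rcases split3 h with h | h
          · exact ⟨_, Step.addL _ (Step.addR _ (Step.parR _ h)), Or.inr rfl⟩
          · exact ⟨_, Step.addR _ (Step.parR _ h), Or.inr rfl⟩
      · exact ⟨p', hs, Or.inr rfl⟩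
    · rintro p q (⟨rfl, rfl⟩ | rfl)
      · ext c; simp [initials_add, initials_par, initials_pre]; try tauto
      · rfl
  · -- backward
    refine ⟨fun r s =>
        (r = _ ∧ s = _) ∨
        (∃ q, r = Proc.par (Proc.add (Proc.pre a x) u) q ∧
              s = Proc.par (Proc.add (Proc.add (Proc.pre a x) (Proc.pre a y)) u) q) ∨
        (∃ q, r = Proc.par (Proc.add (Proc.pre a y) u) q ∧
              s = Proc.par (Proc.add (Proc.add (Proc.pre a x) (Proc.pre a y)) u) q) ∨
        (∃ p, r = Proc.par p (Proc.add (Proc.pre b z) v) ∧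
              s = Proc.par p (Proc.add (Proc.add (Proc.pre b z) (Proc.pre b w)) v)) ∨
        (∃ p, r = Proc.par p (Proc.add (Proc.pre b w) v) ∧
              s = Proc.par p (Proc.add (Proc.add (Proc.pre b z) (Proc.pre b w)) v)) ∨
        r = s, ⟨?_, ?_⟩, Or.inl ⟨rfl, rfl⟩⟩
    · rintro p q (⟨rfl, rfl⟩ | ⟨q0, rfl, rfl⟩ | ⟨q0, rfl, rfl⟩ | ⟨p0, rfl, rfl⟩ | ⟨p0, rfl, rfl⟩ | rfl) c p' hs
      · -- RHS step
        cases hs with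
        | addL _ h =>
          cases h with
          | addL _ h =>
            cases h with
            | addL _ h =>
              cases h with
              | parL _ h => exact ⟨_, Step.parL _ (liftL h), Or.inr (Or.inr (Or.inr (Or.inr (Or.inr rfl))))⟩
              | parR _ h => exact ⟨_, Step.parR _ h, Or.inr (Or.inl ⟨_, rfl, rfl⟩)⟩
            | addR _ h =>
              cases h with
              | parL _ h => exact ⟨_, Step.parL _ (liftR h), Or.inr (Or.inr (Or.inr (Or.inr (Or.inr rfl))))⟩
              | parR _ h => exact ⟨_, Step.parR _ h, Or.inr (Or.inr (Or.inl ⟨_, rfl, rfl⟩))⟩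
          | addR _ h =>
            cases h with
            | parL _ h => exact ⟨_, Step.parL _ h, Or.inr (Or.inr (Or.inr (Or.inl ⟨_, rfl, rfl⟩)))⟩
            | parR _ h => exact ⟨_, Step.parR _ (liftL h), Or.inr (Or.inr (Or.inr (Or.inr (Or.inr rfl))))⟩
        | addR _ h =>
          cases h with
          | parL _ h => exact ⟨_, Step.parL _ h, Or.inr (Or.inr (Or.inr (Or.inr (Or.inl ⟨_, rfl, rfl⟩))))⟩
          | parR _ h => exact ⟨_, Step.parR _ (liftR h), Or.inr (Or.inr (Or.inr (Or.inr (Or.inr rfl))))⟩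
      · cases hs with
        | parL _ h => exact ⟨_, Step.parL _ (liftL h), Or.inr (Or.inr (Or.inr (Or.inr (Or.inr rfl))))⟩
        | parR _ h => exact ⟨_, Step.parR _ h, Or.inr (Or.inl ⟨_, rfl, rfl⟩)⟩
      · cases hs with
        | parL _ h => exact ⟨_, Step.parL _ (liftR h), Or.inr (Or.inr (Or.inr (Or.inr (Or.inr rfl))))⟩
        | parR _ h => exact ⟨_, Step.parR _ h, Or.inr (Or.inr (Or.inl ⟨_, rfl, rfl⟩))⟩
      · cases hs with
        | parL _ h => exact ⟨_, Step.parL _ h, Or.inr (Or.inr (Or.inr (Or.inl ⟨_, rfl, rfl⟩)))⟩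
        | parR _ h => exact ⟨_, Step.parR _ (liftL h), Or.inr (Or.inr (Or.inr (Or.inr (Or.inr rfl))))⟩
      · cases hs with
        | parL _ h => exact ⟨_, Step.parL _ h, Or.inr (Or.inr (Or.inr (Or.inr (Or.inl ⟨_, rfl, rfl⟩))))⟩
        | parR _ h => exact ⟨_, Step.parR _ (liftR h), Or.inr (Or.inr (Or.inr (Or.inr (Or.inr rfl))))⟩
      · exact ⟨p', hs, Or.inr (Or.inr (Or.inr (Or.inr (Or.inr rfl))))⟩
    · rintro p q (⟨rfl, rfl⟩ | ⟨q0, rfl, rfl⟩ | ⟨q0, rfl, rfl⟩ | ⟨p0, rfl, rfl⟩ | ⟨p0, rfl, rfl⟩ | rfl) <;>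
        first
          | rfl
          | (ext c; simp [initials_add, initials_par, initials_pre]; try tauto)
end

section
/- The simplified distributivity law (a.x + a.y + u) ‖ c.z ≈ (a.x + u) ‖ c.z + (a.y + u) ‖ c.z is NOT sound for ready simulation equivalence: there exist processes witnessing its failure; concretely, for distinct actions a, b, c, the process (a.0 + a.a.0 + b.0) ‖ c.0 is not ready simulation equivalent to (a.0 + b.0) ‖ c.0 + (a.a.0 + b.0) ‖ c.0. -/
theorem simplified_distributivity_not_sound_RS {A : Type} [Fintype A] [Nonempty A]
    (a b c : A) (hab : a ≠ b) (hac : a ≠ c) (hbc : b ≠ c) :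
    ¬ RSEquiv
      (Proc.par (Proc.add (Proc.add (Proc.pre a Proc.nil)
                  (Proc.pre a (Proc.pre a Proc.nil))) (Proc.pre b Proc.nil))
                (Proc.pre c Proc.nil))
      (Proc.add
        (Proc.par (Proc.add (Proc.pre a Proc.nil) (Proc.pre b Proc.nil))
                  (Proc.pre c Proc.nil))
        (Proc.par (Proc.add (Proc.pre a (Proc.pre a Proc.nil)) (Proc.pre b Proc.nil))
                  (Proc.pre c Proc.nil))) := by
  rintro ⟨⟨R, ⟨hsim, hinit⟩, hR⟩, -⟩
  set P : Proc A := Proc.add (Proc.add (Proc.pre a Proc.nil)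
      (Proc.pre a (Proc.pre a Proc.nil))) (Proc.pre b Proc.nil) with hP
  obtain ⟨q1, hq1, hRq1⟩ := hsim _ _ hR c (Proc.par P Proc.nil)
    (Step.parR _ (Step.pre c Proc.nil))
  cases hq1 with
  | addL _ h =>
    cases h with
    | parL _ h =>
      cases h with
      | addL _ h => cases h; exact hac rfl
      | addR _ h => cases h; exact hbc rfl
    | parR _ h =>
      cases h
      obtain ⟨q2, hq2, hRq2⟩ := hsim _ _ hRq1 a (Proc.par (Proc.pre a Proc.nil) Proc.nil)
        (Step.parL _ (Step.addL _ (Step.addR _ (Step.pre a (Proc.pre a Proc.nil)))))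
      cases hq2 with
      | parL _ h =>
        cases h with
        | addL _ h =>
          cases h
          have heq := hinit _ _ hRq2
          have ha : a ∈ initials (Proc.par (Proc.pre a Proc.nil) Proc.nil) :=
            ⟨_, Step.parL _ (Step.pre a Proc.nil)⟩
          rw [heq] at ha
          obtain ⟨p', hp'⟩ := ha
          cases hp' with
          | parL _ h => cases h
          | parR _ h => cases h
        | addR _ h => cases h; exact hab rfl
      | parR _ h => cases h
  | addR _ h =>
    cases h with
    | parL _ h =>
      cases h with
      | addL _ h => cases h; exact hac rfl
      | addR _ h => cases h; exact hbc rfl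
    | parR _ h =>
      cases h
      obtain ⟨q2, hq2, hRq2⟩ := hsim _ _ hRq1 a (Proc.par Proc.nil Proc.nil)
        (Step.parL _ (Step.addL _ (Step.addL _ (Step.pre a Proc.nil))))
      cases hq2 with
      | parL _ h =>
        cases h with
        | addL _ h =>
          cases h
          have heq := hinit _ _ hRq2
          have ha : a ∈ initials (Proc.par (Proc.pre a Proc.nil) Proc.nil) :=
            ⟨_, Step.parL _ (Step.pre a Proc.nil)⟩
          rw [← heq] at ha
          obtain ⟨p', hp'⟩ := ha
          cases hp' with
          | parL _ h => cases h
          | parR _ h => cases h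
        | addR _ h => cases h; exact hab rfl
      | parR _ h => cases h
end

section
/- The axiom SP1 is sound for simulation equivalence: for all processes x, y, z, w, the process (x + y) ‖ (z + w) is simulation equivalent to x ‖ (z + w) + y ‖ (z + w) + (x + y) ‖ z + (x + y) ‖ w. -/
def Sim {A : Type} (p q : Proc A) : Prop := ∃ R, IsSimulation R ∧ R p q

lemma sim_isSim {A : Type} : IsSimulation (Sim (A := A)) := by
  rintro p q ⟨R, hR, hpq⟩ a p' hstep
  obtain ⟨q', hq', hR'⟩ := hR p q hpq a p' hstep
  exact ⟨q', hq', R, hR, hR'⟩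

lemma sim_refl {A : Type} (p : Proc A) : Sim p p :=
  ⟨Eq, by rintro p q rfl a p' h; exact ⟨p', h, rfl⟩, rfl⟩

lemma sim_addL {A : Type} (p q : Proc A) : Sim p (Proc.add p q) := by
  refine ⟨fun a b => b = Proc.add a q ∨ a = b, ?_, Or.inl rfl⟩
  rintro u v (rfl | rfl) a u' h
  · exact ⟨u', Step.addL q h, Or.inr rfl⟩
  · exact ⟨u', h, Or.inr rfl⟩

lemma sim_addR {A : Type} (p q : Proc A) : Sim q (Proc.add p q) := by
  refine ⟨fun a b => b = Proc.add p a ∨ a = b, ?_, Or.inl rfl⟩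
  rintro u v (rfl | rfl) a u' h
  · exact ⟨u', Step.addR p h, Or.inr rfl⟩
  · exact ⟨u', h, Or.inr rfl⟩

lemma sim_add_elim {A : Type} {p q r : Proc A} (hp : Sim p r) (hq : Sim q r) :
    Sim (Proc.add p q) r := by
  refine ⟨fun a b => Sim a b ∨ (a = Proc.add p q ∧ b = r), ?_, Or.inr ⟨rfl, rfl⟩⟩
  rintro u v (h | ⟨rfl, rfl⟩) a u' hstep
  · obtain ⟨v', hv', hsim⟩ := sim_isSim u v h a u' hstep
    exact ⟨v', hv', Or.inl hsim⟩
  · cases hstep with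
    | addL _ h =>
        obtain ⟨v', hv', hsim⟩ := sim_isSim _ _ hp _ _ h
        exact ⟨v', hv', Or.inl hsim⟩
    | addR _ h =>
        obtain ⟨v', hv', hsim⟩ := sim_isSim _ _ hq _ _ h
        exact ⟨v', hv', Or.inl hsim⟩

lemma sim_par_mono {A : Type} {p p' q q' : Proc A} (hp : Sim p p') (hq : Sim q q') :
    Sim (Proc.par p q) (Proc.par p' q') := by
  refine ⟨fun a b => ∃ u v u' v', a = Proc.par u v ∧ b = Proc.par u' v' ∧ Sim u u' ∧ Sim v v',
    ?_, p, q, p', q', rfl, rfl, hp, hq⟩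
  rintro _ _ ⟨u, v, u', v', rfl, rfl, hu, hv⟩ a s hstep
  cases hstep with
  | parL _ h =>
      obtain ⟨w, hw, hsim⟩ := sim_isSim _ _ hu _ _ h
      exact ⟨Proc.par w v', Step.parL _ hw, _, _, _, _, rfl, rfl, hsim, hv⟩
  | parR _ h =>
      obtain ⟨w, hw, hsim⟩ := sim_isSim _ _ hv _ _ h
      exact ⟨Proc.par u' w, Step.parR _ hw, _, _, _, _, rfl, rfl, hu, hsim⟩

theorem SP1_sound {A : Type} [Fintype A] [Nonempty A] (x y z w : Proc A) :
    SimEquiv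
      (Proc.par (Proc.add x y) (Proc.add z w))
      (Proc.add (Proc.add (Proc.add
        (Proc.par x (Proc.add z w))
        (Proc.par y (Proc.add z w)))
        (Proc.par (Proc.add x y) z))
        (Proc.par (Proc.add x y) w)) := by
  constructor
  · -- forward: relation is identity plus the one pair
    refine ⟨fun a b => a = b ∨ (a = Proc.par (Proc.add x y) (Proc.add z w) ∧
      b = Proc.add (Proc.add (Proc.add
        (Proc.par x (Proc.add z w))
        (Proc.par y (Proc.add z w)))
        (Proc.par (Proc.add x y) z))
        (Proc.par (Proc.add x y) w)), ?_, Or.inr ⟨rfl, rfl⟩⟩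
    rintro p q (rfl | ⟨rfl, rfl⟩) a p' hstep
    · exact ⟨p', hstep, Or.inl rfl⟩
    · cases hstep with
      | parL _ h =>
          cases h with
          | addL _ h =>
              exact ⟨_, Step.addL _ (Step.addL _ (Step.addL _ (Step.parL _ h))), Or.inl rfl⟩
          | addR _ h =>
              exact ⟨_, Step.addL _ (Step.addL _ (Step.addR _ (Step.parL _ h))), Or.inl rfl⟩
      | parR _ h =>
          cases h with
          | addL _ h =>
              exact ⟨_, Step.addL _ (Step.addR _ (Step.parR _ h)), Or.inl rfl⟩
          | addR _ h =>
              exact ⟨_, Step.addR _ (Step.parR _ h), Or.inl rfl⟩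
  · have h1 : Sim (Proc.par x (Proc.add z w)) (Proc.par (Proc.add x y) (Proc.add z w)) :=
      sim_par_mono (sim_addL x y) (sim_refl _)
    have h2 : Sim (Proc.par y (Proc.add z w)) (Proc.par (Proc.add x y) (Proc.add z w)) :=
      sim_par_mono (sim_addR x y) (sim_refl _)
    have h3 : Sim (Proc.par (Proc.add x y) z) (Proc.par (Proc.add x y) (Proc.add z w)) :=
      sim_par_mono (sim_refl _) (sim_addL z w)
    have h4 : Sim (Proc.par (Proc.add x y) w) (Proc.par (Proc.add x y) (Proc.add z w)) :=
      sim_par_mono (sim_refl _) (sim_addR z w)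
    exact sim_add_elim (sim_add_elim (sim_add_elim h1 h2) h3) h4
end

section
/- The axiom SP2 is sound for simulation equivalence: for every action a and processes x, y, z, the process a.x ‖ (y + z) is simulation equivalent to a.(x ‖ (y + z)) + a.x ‖ y + a.x ‖ z. -/
theorem SP2_sound {A : Type} [Fintype A] [Nonempty A] (a : A) (x y z : Proc A) :
    SimEquiv
      (Proc.par (Proc.pre a x) (Proc.add y z))
      (Proc.add (Proc.add
        (Proc.pre a (Proc.par x (Proc.add y z)))
        (Proc.par (Proc.pre a x) y))
        (Proc.par (Proc.pre a x) z)) := by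
  constructor
  · -- forward
    refine ⟨fun p q => p = q ∨ (p = Proc.par (Proc.pre a x) (Proc.add y z) ∧ q = Proc.add (Proc.add
        (Proc.pre a (Proc.par x (Proc.add y z)))
        (Proc.par (Proc.pre a x) y))
        (Proc.par (Proc.pre a x) z)), ?_, Or.inr ⟨rfl, rfl⟩⟩
    rintro p q (rfl | ⟨rfl, rfl⟩) b p' hstep
    · exact ⟨p', hstep, Or.inl rfl⟩
    · cases hstep with
      | parL q h =>
        cases h
        exact ⟨_, .addL _ (.addL _ (.pre a _)), Or.inl rfl⟩
      | parR p h =>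
        cases h with
        | addL q h => exact ⟨_, .addL _ (.addR _ (.parR _ h)), Or.inl rfl⟩
        | addR p h => exact ⟨_, .addR _ (.parR _ h), Or.inl rfl⟩
  · -- backward
    refine ⟨fun p q => p = q ∨
        (∃ u v w, p = Proc.par u v ∧ q = Proc.par u (Proc.add v w)) ∨
        (∃ u v w, p = Proc.par u w ∧ q = Proc.par u (Proc.add v w)) ∨
        (p = Proc.add (Proc.add
        (Proc.pre a (Proc.par x (Proc.add y z)))
        (Proc.par (Proc.pre a x) y))
        (Proc.par (Proc.pre a x) z) ∧ q = Proc.par (Proc.pre a x) (Proc.add y z)), ?_, Or.inr (Or.inr (Or.inr ⟨rfl, rfl⟩))⟩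
    rintro p q (rfl | ⟨u, v, w, rfl, rfl⟩ | ⟨u, v, w, rfl, rfl⟩ | ⟨rfl, rfl⟩) b p' hstep
    · exact ⟨p', hstep, Or.inl rfl⟩
    · cases hstep with
      | parL q h =>
        exact ⟨_, .parL _ h, Or.inr (Or.inl ⟨_, v, w, rfl, rfl⟩)⟩
      | parR p h =>
        exact ⟨_, .parR _ (.addL _ h), Or.inl rfl⟩
    · cases hstep with
      | parL q h =>
        exact ⟨_, .parL _ h, Or.inr (Or.inr (Or.inl ⟨_, v, w, rfl, rfl⟩))⟩
      | parR p h =>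
        exact ⟨_, .parR _ (.addR _ h), Or.inl rfl⟩
    · cases hstep with
      | addL q h =>
        cases h with
        | addL q h =>
          cases h
          exact ⟨_, .parL _ (.pre a x), Or.inl rfl⟩
        | addR p h =>
          cases h with
          | parL q h =>
            cases h
            exact ⟨_, .parL _ (.pre a x), Or.inr (Or.inl ⟨x, y, z, rfl, rfl⟩)⟩
          | parR p h =>
            exact ⟨_, .parR _ (.addL _ h), Or.inl rfl⟩
      | addR p h =>
        cases h with
        | parL q h =>
          cases h
          exact ⟨_, .parL _ (.pre a x), Or.inr (Or.inr (Or.inl ⟨x, y, z, rfl, rfl⟩))⟩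
        | parR p h =>
          exact ⟨_, .parR _ (.addR _ h), Or.inl rfl⟩
end

section
/- The axiom CSP2 is sound for completed simulation equivalence: for all actions a, b, c and processes x, y, z, w, the process a.x ‖ (b.y + c.z + w) is completed simulation equivalent to a.(x ‖ (b.y + c.z + w)) + a.x ‖ (b.y + w) + a.x ‖ (c.z + w). -/
section CSP2Aux

variable {A : Type}

/-- Simulation for the left-to-right direction. -/
inductive CSP2R1 (a b c : A) (x y z w : Proc A) : Proc A → Proc A → Prop where
  | eq (p : Proc A) : CSP2R1 a b c x y z w p p
  | top : CSP2R1 a b c x y z w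
      (Proc.par (Proc.pre a x)
                (Proc.add (Proc.add (Proc.pre b y) (Proc.pre c z)) w))
      (Proc.add (Proc.add
        (Proc.pre a (Proc.par x (Proc.add (Proc.add (Proc.pre b y) (Proc.pre c z)) w)))
        (Proc.par (Proc.pre a x) (Proc.add (Proc.pre b y) w)))
        (Proc.par (Proc.pre a x) (Proc.add (Proc.pre c z) w)))

/-- Simulation for the right-to-left direction. -/
inductive CSP2R2 (a b c : A) (x y z w : Proc A) : Proc A → Proc A → Prop where
  | eq (p : Proc A) : CSP2R2 a b c x y z w p p
  | top : CSP2R2 a b c x y z w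
      (Proc.add (Proc.add
        (Proc.pre a (Proc.par x (Proc.add (Proc.add (Proc.pre b y) (Proc.pre c z)) w)))
        (Proc.par (Proc.pre a x) (Proc.add (Proc.pre b y) w)))
        (Proc.par (Proc.pre a x) (Proc.add (Proc.pre c z) w)))
      (Proc.par (Proc.pre a x)
                (Proc.add (Proc.add (Proc.pre b y) (Proc.pre c z)) w))
  | parB (u : Proc A) : CSP2R2 a b c x y z w
      (Proc.par u (Proc.add (Proc.pre b y) w))
      (Proc.par u (Proc.add (Proc.add (Proc.pre b y) (Proc.pre c z)) w))
  | parC (u : Proc A) : CSP2R2 a b c x y z w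
      (Proc.par u (Proc.add (Proc.pre c z) w))
      (Proc.par u (Proc.add (Proc.add (Proc.pre b y) (Proc.pre c z)) w))

lemma CSP2R1_cs (a b c : A) (x y z w : Proc A) :
    IsCompletedSimulation (CSP2R1 a b c x y z w) := by
  constructor
  · intro p q h d p' hs
    cases h with
    | eq p => exact ⟨p', hs, .eq _⟩
    | top =>
      cases hs with
      | parL q h =>
        cases h
        exact ⟨_, .addL _ (.addL _ (.pre _ _)), .eq _⟩
      | parR p h =>
        cases h with
        | addL q h =>
          cases h with
          | addL q h => cases h; exact ⟨_, .addL _ (.addR _ (.parR _ (.addL _ (.pre _ _)))), .eq _⟩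
          | addR p h => cases h; exact ⟨_, .addR _ (.parR _ (.addL _ (.pre _ _))), .eq _⟩
        | addR p h =>
          exact ⟨_, .addL _ (.addR _ (.parR _ (.addR _ h))), .eq _⟩
  · intro p q h hst
    cases h with
    | eq p => exact hst
    | top => exact absurd (Step.parL _ (.pre a x)) (hst a _)

lemma CSP2R2_cs (a b c : A) (x y z w : Proc A) :
    IsCompletedSimulation (CSP2R2 a b c x y z w) := by
  constructor
  · intro p q h d p' hs
    cases h with
    | eq p => exact ⟨p', hs, .eq _⟩
    | top =>
      cases hs with
      | addL q h =>
        cases h with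
        | addL q h =>
          cases h
          exact ⟨_, .parL _ (.pre _ _), .eq _⟩
        | addR p h =>
          cases h with
          | parL q h =>
            cases h
            exact ⟨_, .parL _ (.pre _ _), .parB _⟩
          | parR p h =>
            cases h with
            | addL q h => cases h; exact ⟨_, .parR _ (.addL _ (.addL _ (.pre _ _))), .eq _⟩
            | addR p h => exact ⟨_, .parR _ (.addR _ h), .eq _⟩
      | addR p h =>
        cases h with
        | parL q h =>
          cases h
          exact ⟨_, .parL _ (.pre _ _), .parC _⟩
        | parR p h =>
          cases h with
          | addL q h => cases h; exact ⟨_, .parR _ (.addL _ (.addR _ (.pre _ _))), .eq _⟩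
          | addR p h => exact ⟨_, .parR _ (.addR _ h), .eq _⟩
    | parB u =>
      cases hs with
      | parL q h => exact ⟨_, .parL _ h, .parB _⟩
      | parR p h =>
        cases h with
        | addL q h => cases h; exact ⟨_, .parR _ (.addL _ (.addL _ (.pre _ _))), .eq _⟩
        | addR p h => exact ⟨_, .parR _ (.addR _ h), .eq _⟩
    | parC u =>
      cases hs with
      | parL q h => exact ⟨_, .parL _ h, .parC _⟩
      | parR p h =>
        cases h with
        | addL q h => cases h; exact ⟨_, .parR _ (.addL _ (.addR _ (.pre _ _))), .eq _⟩
        | addR p h => exact ⟨_, .parR _ (.addR _ h), .eq _⟩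
  · intro p q h hst
    cases h with
    | eq p => exact hst
    | top => exact absurd (Step.addL _ (.addL _ (.pre a _))) (hst a _)
    | parB u => exact absurd (Step.parR _ (.addL _ (.pre b y))) (hst b _)
    | parC u => exact absurd (Step.parR _ (.addL _ (.pre c z))) (hst c _)

end CSP2Aux

theorem CSP2_sound {A : Type} [Fintype A] [Nonempty A]
    (a b c : A) (x y z w : Proc A) :
    CSEquiv
      (Proc.par (Proc.pre a x)
                (Proc.add (Proc.add (Proc.pre b y) (Proc.pre c z)) w))
      (Proc.add (Proc.add
        (Proc.pre a (Proc.par x (Proc.add (Proc.add (Proc.pre b y) (Proc.pre c z)) w)))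
        (Proc.par (Proc.pre a x) (Proc.add (Proc.pre b y) w)))
        (Proc.par (Proc.pre a x) (Proc.add (Proc.pre c z) w))) := by
  exact ⟨⟨_, CSP2R1_cs a b c x y z w, .top⟩, ⟨_, CSP2R2_cs a b c x y z w, .top⟩⟩
end

section
/- The axiom SP2 is not sound for ready simulation equivalence when there are at least three distinct actions: for distinct actions a, b, c, the process a.0 ‖ (b.0 + c.0) is not ready simulation equivalent to a.0 ‖ b.0 + a.0 ‖ c.0 + a.0 ‖ (b.0 + c.0). -/
theorem SP2_not_sound_RS {A : Type} [Fintype A] [Nonempty A]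
    (a b c : A) (hab : a ≠ b) (hac : a ≠ c) (hbc : b ≠ c) :
    ¬ RSEquiv
      (Proc.par (Proc.pre a Proc.nil)
                (Proc.add (Proc.pre b Proc.nil) (Proc.pre c Proc.nil)))
      (Proc.add (Proc.add
        (Proc.par (Proc.pre a Proc.nil) (Proc.pre b Proc.nil))
        (Proc.par (Proc.pre a Proc.nil) (Proc.pre c Proc.nil)))
        (Proc.par (Proc.pre a Proc.nil)
                  (Proc.add (Proc.pre b Proc.nil) (Proc.pre c Proc.nil)))) := by
  rintro ⟨-, ⟨R, ⟨hsim, hinit⟩, hR⟩⟩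
  -- RHS can do an a-step to nil ‖ b.0
  have hstep : Step
      (Proc.add (Proc.add
        (Proc.par (Proc.pre a Proc.nil) (Proc.pre b Proc.nil))
        (Proc.par (Proc.pre a Proc.nil) (Proc.pre c Proc.nil)))
        (Proc.par (Proc.pre a Proc.nil)
                  (Proc.add (Proc.pre b Proc.nil) (Proc.pre c Proc.nil))))
      a (Proc.par Proc.nil (Proc.pre b Proc.nil)) :=
    Step.addL _ (Step.addL _ (Step.parL _ (Step.pre a Proc.nil)))
  obtain ⟨q', hq', hR'⟩ := hsim _ _ hR a _ hstep
  -- the only a-step of LHS goes to nil ‖ (b.0 + c.0)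
  have hq'' : q' = Proc.par Proc.nil
      (Proc.add (Proc.pre b Proc.nil) (Proc.pre c Proc.nil)) := by
    cases hq' with
    | parL _ h => cases h; rfl
    | parR _ h =>
      cases h with
      | addL _ h => cases h; exact absurd rfl hab
      | addR _ h => cases h; exact absurd rfl hac
  subst hq''
  have heq := hinit _ _ hR'
  have hc : c ∈ initials (Proc.par Proc.nil
      (Proc.add (Proc.pre b Proc.nil) (Proc.pre c Proc.nil))) :=
    ⟨_, Step.parR _ (Step.addR _ (Step.pre c Proc.nil))⟩
  rw [← heq] at hc
  obtain ⟨p', hp'⟩ := hc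
  cases hp' with
  | parL _ h => cases h
  | parR _ h => cases h; exact absurd rfl hbc.symm
end

section
/- The full distributivity law TP: (x + y) ‖ z ≈ x ‖ z + y ‖ z is sound for trace equivalence: for all processes p, q, r, the set of traces of (p + q) ‖ r equals the set of traces of p ‖ r + q ‖ r. -/
lemma tr_union {A : Type} (p q : Proc A) (α : List A) (r : Proc A) :
    (∃ s, TraceTo (Proc.par (Proc.add p q) r) α s) ↔
      (∃ s, TraceTo (Proc.par p r) α s) ∨ (∃ s, TraceTo (Proc.par q r) α s) := by
  induction α generalizing r with
  | nil =>
      constructor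
      · intro _; exact Or.inl ⟨_, .refl _⟩
      · intro _; exact ⟨_, .refl _⟩
  | cons a α ih =>
      constructor
      · rintro ⟨s, hs⟩
        cases hs with
        | step h ht =>
          cases h with
          | parL _ h' =>
            cases h' with
            | addL _ h'' => exact Or.inl ⟨s, .step (.parL _ h'') ht⟩
            | addR _ h'' => exact Or.inr ⟨s, .step (.parL _ h'') ht⟩
          | parR _ h' =>
            rcases (ih _).1 ⟨s, ht⟩ with ⟨s', hs'⟩ | ⟨s', hs'⟩
            · exact Or.inl ⟨s', .step (.parR _ h') hs'⟩
            · exact Or.inr ⟨s', .step (.parR _ h') hs'⟩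
      · rintro (⟨s, hs⟩ | ⟨s, hs⟩)
        · cases hs with
          | step h ht =>
            cases h with
            | parL _ h' => exact ⟨s, .step (.parL _ (.addL _ h')) ht⟩
            | parR _ h' =>
              obtain ⟨s', hs'⟩ := (ih _).2 (Or.inl ⟨s, ht⟩)
              exact ⟨s', .step (.parR _ h') hs'⟩
        · cases hs with
          | step h ht =>
            cases h with
            | parL _ h' => exact ⟨s, .step (.parL _ (.addR _ h')) ht⟩
            | parR _ h' =>
              obtain ⟨s', hs'⟩ := (ih _).2 (Or.inr ⟨s, ht⟩)
              exact ⟨s', .step (.parR _ h') hs'⟩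

lemma tr_add {A : Type} (u v : Proc A) (α : List A) :
    (∃ s, TraceTo (Proc.add u v) α s) ↔
      (∃ s, TraceTo u α s) ∨ (∃ s, TraceTo v α s) := by
  cases α with
  | nil =>
      constructor
      · intro _; exact Or.inl ⟨_, .refl _⟩
      · intro _; exact ⟨_, .refl _⟩
  | cons a α =>
      constructor
      · rintro ⟨s, hs⟩
        cases hs with
        | step h ht =>
          cases h with
          | addL _ h' => exact Or.inl ⟨s, .step h' ht⟩
          | addR _ h' => exact Or.inr ⟨s, .step h' ht⟩
      · rintro (⟨s, hs⟩ | ⟨s, hs⟩)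
        · cases hs with
          | step h ht => exact ⟨s, .step (.addL _ h) ht⟩
        · cases hs with
          | step h ht => exact ⟨s, .step (.addR _ h) ht⟩

theorem TP_sound_traces {A : Type} [Fintype A] [Nonempty A] (p q r : Proc A) :
    traces (Proc.par (Proc.add p q) r)
      = traces (Proc.add (Proc.par p r) (Proc.par q r)) := by
  ext α
  simp only [traces, Set.mem_setOf_eq]
  rw [tr_union, tr_add]
end

section
/- The axiom CTP is sound for completed trace equivalence: for all actions a, b and processes x, y, w, z, the processes (a.x + b.y + w) ‖ z and (a.x + w) ‖ z + (b.y + w) ‖ z have the same sets of completed traces (and the same sets of traces). -/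
section Aux

variable {A : Type} (a b : A) (x y w : Proc A)

local notation "S" => Proc.add (Proc.add (Proc.pre a x) (Proc.pre b y)) w
local notation "Q1" => Proc.add (Proc.pre a x) w
local notation "Q2" => Proc.add (Proc.pre b y) w

lemma stepS {c : A} {p' : Proc A} :
    Step (S) c p' ↔ Step (Q1) c p' ∨ Step (Q2) c p' := by
  constructor
  · intro h
    cases h with
    | addL _ h =>
      cases h with
      | addL _ h => exact Or.inl (Step.addL _ h)
      | addR _ h => exact Or.inr (Step.addL _ h)
    | addR _ h => exact Or.inl (Step.addR _ h)
  · intro h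
    rcases h with h | h
    · cases h with
      | addL _ h => exact Step.addL _ (Step.addL _ h)
      | addR _ h => exact Step.addR _ h
    · cases h with
      | addL _ h => exact Step.addL _ (Step.addR _ h)
      | addR _ h => exact Step.addR _ h

lemma notstuckS (z : Proc A) : ¬ stuck ((S).par z) := fun h =>
  h a _ (Step.parL _ (Step.addL _ (Step.addL _ (Step.pre a x))))

lemma notstuckQ1 (z : Proc A) : ¬ stuck ((Q1).par z) := fun h =>
  h a _ (Step.parL _ (Step.addL _ (Step.pre a x)))

lemma notstuckQ2 (z : Proc A) : ¬ stuck ((Q2).par z) := fun h =>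
  h b _ (Step.parL _ (Step.addL _ (Step.pre b y)))

lemma tr_aux : ∀ (α : List A) (z : Proc A),
    α ∈ traces ((S).par z) ↔ α ∈ traces ((Q1).par z) ∨ α ∈ traces ((Q2).par z) := by
  intro α
  induction α with
  | nil =>
    intro z
    constructor
    · intro _; exact Or.inl ⟨_, TraceTo.refl _⟩
    · intro _; exact ⟨_, TraceTo.refl _⟩
  | cons c α ih =>
    intro z
    constructor
    · rintro ⟨q, hq⟩
      cases hq with
      | step hs ht =>
        cases hs with
        | parL _ h =>
          rcases (stepS a b x y w).mp h with h' | h'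
          · exact Or.inl ⟨q, TraceTo.step (Step.parL _ h') ht⟩
          · exact Or.inr ⟨q, TraceTo.step (Step.parL _ h') ht⟩
        | parR _ h =>
          rcases (ih _).mp ⟨q, ht⟩ with ⟨q', hq'⟩ | ⟨q', hq'⟩
          · exact Or.inl ⟨q', TraceTo.step (Step.parR _ h) hq'⟩
          · exact Or.inr ⟨q', TraceTo.step (Step.parR _ h) hq'⟩
    · rintro (⟨q, hq⟩ | ⟨q, hq⟩) <;> cases hq with
      | step hs ht =>
        cases hs with
        | parL _ h =>
          first
          | exact ⟨q, TraceTo.step (Step.parL _ ((stepS a b x y w).mpr (Or.inl h))) ht⟩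
          | exact ⟨q, TraceTo.step (Step.parL _ ((stepS a b x y w).mpr (Or.inr h))) ht⟩
        | parR _ h =>
          rcases (ih _).mpr (by first | exact Or.inl ⟨q, ht⟩ | exact Or.inr ⟨q, ht⟩) with ⟨q', hq'⟩
          exact ⟨q', TraceTo.step (Step.parR _ h) hq'⟩

lemma ctr_aux : ∀ (α : List A) (z : Proc A),
    α ∈ ctraces ((S).par z) ↔ α ∈ ctraces ((Q1).par z) ∨ α ∈ ctraces ((Q2).par z) := by
  intro α
  induction α with
  | nil =>
    intro z
    constructor
    · rintro ⟨q, hq, hst⟩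
      cases hq; exact absurd hst (notstuckS a b x y w z)
    · rintro (⟨q, hq, hst⟩ | ⟨q, hq, hst⟩) <;> cases hq
      · exact absurd hst (notstuckQ1 a x w z)
      · exact absurd hst (notstuckQ2 b y w z)
  | cons c α ih =>
    intro z
    constructor
    · rintro ⟨q, hq, hst⟩
      cases hq with
      | step hs ht =>
        cases hs with
        | parL _ h =>
          rcases (stepS a b x y w).mp h with h' | h'
          · exact Or.inl ⟨q, TraceTo.step (Step.parL _ h') ht, hst⟩
          · exact Or.inr ⟨q, TraceTo.step (Step.parL _ h') ht, hst⟩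
        | parR _ h =>
          rcases (ih _).mp ⟨q, ht, hst⟩ with ⟨q', hq', hst'⟩ | ⟨q', hq', hst'⟩
          · exact Or.inl ⟨q', TraceTo.step (Step.parR _ h) hq', hst'⟩
          · exact Or.inr ⟨q', TraceTo.step (Step.parR _ h) hq', hst'⟩
    · rintro (⟨q, hq, hst⟩ | ⟨q, hq, hst⟩) <;> cases hq with
      | step hs ht =>
        cases hs with
        | parL _ h =>
          first
          | exact ⟨q, TraceTo.step (Step.parL _ ((stepS a b x y w).mpr (Or.inl h))) ht, hst⟩
          | exact ⟨q, TraceTo.step (Step.parL _ ((stepS a b x y w).mpr (Or.inr h))) ht, hst⟩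
        | parR _ h =>
          rcases (ih _).mpr (by first | exact Or.inl ⟨q, ht, hst⟩ | exact Or.inr ⟨q, ht, hst⟩)
            with ⟨q', hq', hst'⟩
          exact ⟨q', TraceTo.step (Step.parR _ h) hq', hst'⟩

lemma traces_add (p q : Proc A) :
    traces (Proc.add p q) = traces p ∪ traces q := by
  ext α
  constructor
  · rintro ⟨r, hr⟩
    cases hr with
    | refl => exact Or.inl ⟨_, TraceTo.refl _⟩
    | step hs ht =>
      cases hs with
      | addL _ h => exact Or.inl ⟨_, TraceTo.step h ht⟩
      | addR _ h => exact Or.inr ⟨_, TraceTo.step h ht⟩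
  · rintro (⟨r, hr⟩ | ⟨r, hr⟩) <;> cases hr
    · exact ⟨_, TraceTo.refl _⟩
    · exact ⟨_, TraceTo.step (Step.addL _ (by assumption)) (by assumption)⟩
    · exact ⟨_, TraceTo.refl _⟩
    · exact ⟨_, TraceTo.step (Step.addR _ (by assumption)) (by assumption)⟩

lemma ctraces_add (p q : Proc A) (hp : ¬ stuck p) (hq : ¬ stuck q) :
    ctraces (Proc.add p q) = ctraces p ∪ ctraces q := by
  ext α
  constructor
  · rintro ⟨r, hr, hst⟩
    cases hr with
    | refl => exact absurd (fun c r h => hst c r (Step.addL _ h)) hp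
    | step hs ht =>
      cases hs with
      | addL _ h => exact Or.inl ⟨_, TraceTo.step h ht, hst⟩
      | addR _ h => exact Or.inr ⟨_, TraceTo.step h ht, hst⟩
  · rintro (⟨r, hr, hst⟩ | ⟨r, hr, hst⟩) <;> cases hr
    · exact absurd hst hp
    · exact ⟨_, TraceTo.step (Step.addL _ (by assumption)) (by assumption), hst⟩
    · exact absurd hst hq
    · exact ⟨_, TraceTo.step (Step.addR _ (by assumption)) (by assumption), hst⟩

end Aux

theorem CTP_sound {A : Type} [Fintype A] [Nonempty A]
    (a b : A) (x y w z : Proc A) :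
    ctraces (Proc.par (Proc.add (Proc.add (Proc.pre a x) (Proc.pre b y)) w) z)
        = ctraces (Proc.add (Proc.par (Proc.add (Proc.pre a x) w) z)
                            (Proc.par (Proc.add (Proc.pre b y) w) z))
    ∧ traces (Proc.par (Proc.add (Proc.add (Proc.pre a x) (Proc.pre b y)) w) z)
        = traces (Proc.add (Proc.par (Proc.add (Proc.pre a x) w) z)
                           (Proc.par (Proc.add (Proc.pre b y) w) z)) := by
  constructor
  · rw [ctraces_add _ _ (notstuckQ1 a x w z) (notstuckQ2 b y w z)]
    ext α
    exact ctr_aux a b x y w α z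
  · rw [traces_add]
    ext α
    exact tr_aux a b x y w α z
end

section
/- The axiom FP is sound for ready trace equivalence: for all actions a and processes x, y, w, z, the processes (a.x + a.y + w) ‖ z and (a.x + w) ‖ z + (a.y + w) ‖ z have the same sets of ready traces. -/
inductive RTfrom {A : Type} : Proc A → List (A × Set A) → Prop where
  | nil (p : Proc A) : RTfrom p []
  | cons {p : Proc A} {a : A} {p' : Proc A} {l : List (A × Set A)} :
      Step p a p' → RTfrom p' l → RTfrom p ((a, initials p') :: l)

def readyTraces {A : Type} (p : Proc A) : Set (Set A × List (A × Set A)) :=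
  {x | x.1 = initials p ∧ RTfrom p x.2}

lemma init_big {A : Type} (a : A) (x y w q : Proc A) :
    initials (Proc.par (Proc.add (Proc.add (Proc.pre a x) (Proc.pre a y)) w) q)
      = initials (Proc.par (Proc.add (Proc.pre a x) w) q) := by
  simp [initials_par, initials_add, initials_pre]

lemma init_big' {A : Type} (a : A) (x y w q : Proc A) :
    initials (Proc.par (Proc.add (Proc.add (Proc.pre a x) (Proc.pre a y)) w) q)
      = initials (Proc.par (Proc.add (Proc.pre a y) w) q) := by
  simp [initials_par, initials_add, initials_pre, Set.union_assoc]

lemma key {A : Type} (a : A) (x y w : Proc A) :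
    ∀ (l : List (A × Set A)) (q : Proc A),
      RTfrom (Proc.par (Proc.add (Proc.add (Proc.pre a x) (Proc.pre a y)) w) q) l ↔
      RTfrom (Proc.par (Proc.add (Proc.pre a x) w) q) l ∨
      RTfrom (Proc.par (Proc.add (Proc.pre a y) w) q) l := by
  intro l
  induction l with
  | nil => exact fun q => ⟨fun _ => Or.inl (.nil _), fun _ => .nil _⟩
  | cons hd tl ih =>
    intro q
    constructor
    · intro h
      cases h with
      | cons hs ht =>
        cases hs with
        | parL _ hs =>
          cases hs with
          | addL _ hs =>
            cases hs with
            | addL _ hs => cases hs; exact Or.inl (.cons (.parL _ (.addL _ (.pre a x))) ht)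
            | addR _ hs => cases hs; exact Or.inr (.cons (.parL _ (.addL _ (.pre a y))) ht)
          | addR _ hs =>
            exact Or.inl (.cons (.parL _ (.addR _ hs)) ht)
        | parR _ hs =>
          rcases (ih _).mp ht with h | h
          · left; rw [init_big a x y w]
            exact .cons (.parR _ hs) h
          · right; rw [init_big' a x y w]
            exact .cons (.parR _ hs) h
    · rintro (h | h)
      · cases h with
        | cons hs ht =>
          cases hs with
          | parL _ hs =>
            cases hs with
            | addL _ hs => cases hs; exact .cons (.parL _ (.addL _ (.addL _ (.pre a x)))) ht
            | addR _ hs => exact .cons (.parL _ (.addR _ hs)) ht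
          | parR _ hs =>
            rw [← init_big a x y w]
            exact .cons (.parR _ hs) ((ih _).mpr (Or.inl ht))
      · cases h with
        | cons hs ht =>
          cases hs with
          | parL _ hs =>
            cases hs with
            | addL _ hs => cases hs; exact .cons (.parL _ (.addL _ (.addR _ (.pre a y)))) ht
            | addR _ hs => exact .cons (.parL _ (.addR _ hs)) ht
          | parR _ hs =>
            rw [← init_big' a x y w]
            exact .cons (.parR _ hs) ((ih _).mpr (Or.inr ht))

lemma RTfrom_add {A : Type} (p q : Proc A) (l : List (A × Set A)) :
    RTfrom (Proc.add p q) l ↔ l = [] ∨ RTfrom p l ∨ RTfrom q l := by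
  constructor
  · intro h
    cases h with
    | nil => exact Or.inl rfl
    | cons hs ht =>
      cases hs with
      | addL _ hs => exact Or.inr (Or.inl (.cons hs ht))
      | addR _ hs => exact Or.inr (Or.inr (.cons hs ht))
  · rintro (rfl | h | h)
    · exact .nil _
    · cases h with
      | nil => exact .nil _
      | cons hs ht => exact .cons (.addL _ hs) ht
    · cases h with
      | nil => exact .nil _
      | cons hs ht => exact .cons (.addR _ hs) ht

theorem FP_sound_readyTraces {A : Type} [Fintype A] [Nonempty A]
    (a : A) (x y w z : Proc A) :
    readyTraces (Proc.par (Proc.add (Proc.add (Proc.pre a x) (Proc.pre a y)) w) z)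
      = readyTraces (Proc.add (Proc.par (Proc.add (Proc.pre a x) w) z)
                              (Proc.par (Proc.add (Proc.pre a y) w) z)) := by

  ext ⟨X, l⟩
  have hinit :
      initials (Proc.par (Proc.add (Proc.add (Proc.pre a x) (Proc.pre a y)) w) z)
        = initials (Proc.add (Proc.par (Proc.add (Proc.pre a x) w) z)
                             (Proc.par (Proc.add (Proc.pre a y) w) z)) := by
    simp [initials_par, initials_add, initials_pre]
  simp only [readyTraces, Set.mem_setOf_eq]
  constructor
  · rintro ⟨rfl, h⟩
    refine ⟨hinit, ?_⟩
    rw [RTfrom_add]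
    rcases (key a x y w l z).mp h with h | h
    · exact Or.inr (Or.inl h)
    · exact Or.inr (Or.inr h)
  · rintro ⟨rfl, h⟩
    refine ⟨hinit.symm, ?_⟩
    rw [RTfrom_add] at h
    rcases h with rfl | h | h
    · exact .nil _
    · exact (key a x y w l z).mpr (Or.inl h)
    · exact (key a x y w l z).mpr (Or.inr h)
end

section
/- For every pair of closed BCCSP terms p and q (terms without the parallel operator), there exists a closed BCCSP term r such that the equation p ‖ q ≈ r is derivable from the axiom system E_S consisting of: A0: x+0≈x, A1: x+y≈y+x, A2: (x+y)+z≈x+(y+z), A3: x+x≈x, P0: x‖0≈x, P1: x‖y≈y‖x, S: a(x+y)≈a(x+y)+ax, SP1: (x+y)‖(z+w)≈x‖(z+w)+y‖(z+w)+(x+y)‖z+(x+y)‖w, SP2: ax‖(y+z)≈a(x‖(y+z))+ax‖y+ax‖z, and EL1: ax‖by≈a(x‖by)+b(ax‖y) (all instances over actions a, b). -/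
/-- Open BCCSP_par terms with variables. -/
inductive Tm (A : Type) : Type where
  | nil : Tm A
  | var : ℕ → Tm A
  | pre : A → Tm A → Tm A
  | add : Tm A → Tm A → Tm A
  | par : Tm A → Tm A → Tm A

def tmSubst {A : Type} (σ : ℕ → Tm A) : Tm A → Tm A
  | .nil => .nil
  | .var n => σ n
  | .pre a t => .pre a (tmSubst σ t)
  | .add t u => .add (tmSubst σ t) (tmSubst σ u)
  | .par t u => .par (tmSubst σ t) (tmSubst σ u)

/-- Derivability in equational logic from an axiom system `E`. -/
inductive Deriv {A : Type} (E : Set (Tm A × Tm A)) : Tm A → Tm A → Prop where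
  | ax {t u : Tm A} : (t, u) ∈ E → Deriv E t u
  | refl (t : Tm A) : Deriv E t t
  | symm {t u : Tm A} : Deriv E t u → Deriv E u t
  | trans {t u v : Tm A} : Deriv E t u → Deriv E u v → Deriv E t v
  | subst {t u : Tm A} (σ : ℕ → Tm A) : Deriv E t u → Deriv E (tmSubst σ t) (tmSubst σ u)
  | pre {t u : Tm A} (a : A) : Deriv E t u → Deriv E (.pre a t) (.pre a u)
  | add {t t' u u' : Tm A} : Deriv E t t' → Deriv E u u' → Deriv E (.add t u) (.add t' u')
  | par {t t' u u' : Tm A} : Deriv E t t' → Deriv E u u' → Deriv E (.par t u) (.par t' u')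

def ClosedTm {A : Type} : Tm A → Prop
  | .nil => True
  | .var _ => False
  | .pre _ t => ClosedTm t
  | .add t u => ClosedTm t ∧ ClosedTm u
  | .par t u => ClosedTm t ∧ ClosedTm u

def ParFree {A : Type} : Tm A → Prop
  | .nil => True
  | .var _ => True
  | .pre _ t => ParFree t
  | .add t u => ParFree t ∧ ParFree u
  | .par _ _ => False

/-- The axiom system E_S = {A0, A1, A2, A3, P0, P1, S, SP1, SP2, EL1},
with action letters ranging over `A` and `var 0, var 1, var 2, var 3`
playing the role of the variables `x, y, z, w`. -/
def ES (A : Type) : Set (Tm A × Tm A) :=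
  {e |
    -- A0
    e = ((Tm.add (Tm.var 0) Tm.nil, Tm.var 0) : Tm A × Tm A) ∨
    -- A1
    e = (Tm.add (Tm.var 0) (Tm.var 1), Tm.add (Tm.var 1) (Tm.var 0)) ∨
    -- A2
    e = (Tm.add (Tm.add (Tm.var 0) (Tm.var 1)) (Tm.var 2),
         Tm.add (Tm.var 0) (Tm.add (Tm.var 1) (Tm.var 2))) ∨
    -- A3
    e = (Tm.add (Tm.var 0) (Tm.var 0), Tm.var 0) ∨
    -- P0
    e = (Tm.par (Tm.var 0) Tm.nil, Tm.var 0) ∨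
    -- P1
    e = (Tm.par (Tm.var 0) (Tm.var 1), Tm.par (Tm.var 1) (Tm.var 0)) ∨
    -- S
    (∃ a : A, e = (Tm.pre a (Tm.add (Tm.var 0) (Tm.var 1)),
        Tm.add (Tm.pre a (Tm.add (Tm.var 0) (Tm.var 1))) (Tm.pre a (Tm.var 0)))) ∨
    -- SP1
    e = (Tm.par (Tm.add (Tm.var 0) (Tm.var 1)) (Tm.add (Tm.var 2) (Tm.var 3)),
         Tm.add (Tm.add (Tm.add
           (Tm.par (Tm.var 0) (Tm.add (Tm.var 2) (Tm.var 3)))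
           (Tm.par (Tm.var 1) (Tm.add (Tm.var 2) (Tm.var 3))))
           (Tm.par (Tm.add (Tm.var 0) (Tm.var 1)) (Tm.var 2)))
           (Tm.par (Tm.add (Tm.var 0) (Tm.var 1)) (Tm.var 3))) ∨
    -- SP2
    (∃ a : A, e = (Tm.par (Tm.pre a (Tm.var 0)) (Tm.add (Tm.var 1) (Tm.var 2)),
         Tm.add (Tm.add
           (Tm.pre a (Tm.par (Tm.var 0) (Tm.add (Tm.var 1) (Tm.var 2))))
           (Tm.par (Tm.pre a (Tm.var 0)) (Tm.var 1)))
           (Tm.par (Tm.pre a (Tm.var 0)) (Tm.var 2)))) ∨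
    -- EL1
    (∃ a b : A, e = (Tm.par (Tm.pre a (Tm.var 0)) (Tm.pre b (Tm.var 1)),
         Tm.add (Tm.pre a (Tm.par (Tm.var 0) (Tm.pre b (Tm.var 1))))
                (Tm.pre b (Tm.par (Tm.pre a (Tm.var 0)) (Tm.var 1)))))}

namespace ESElim

variable {A : Type}

def sz : Tm A → ℕ
  | .nil => 1
  | .var _ => 1
  | .pre _ t => sz t + 1
  | .add t u => sz t + sz u + 1
  | .par t u => sz t + sz u + 1

lemma dP0 (t : Tm A) : Deriv (ES A) (.par t .nil) t := by
  have h := Deriv.subst (E := ES A) (fun _ => t)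
    (Deriv.ax (t := .par (.var 0) .nil) (u := .var 0)
      (by simp only [ES, Set.mem_setOf_eq]; tauto))
  simpa [tmSubst] using h

lemma dP1 (t u : Tm A) : Deriv (ES A) (.par t u) (.par u t) := by
  have h := Deriv.subst (E := ES A) (fun n => if n = 0 then t else u)
    (Deriv.ax (t := .par (.var 0) (.var 1)) (u := .par (.var 1) (.var 0))
      (by simp only [ES, Set.mem_setOf_eq]; tauto))
  simpa [tmSubst] using h

lemma dEL1 (a b : A) (x y : Tm A) :
    Deriv (ES A) (.par (.pre a x) (.pre b y))
      (.add (.pre a (.par x (.pre b y))) (.pre b (.par (.pre a x) y))) := by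
  have h := Deriv.subst (E := ES A) (fun n => if n = 0 then x else y)
    (Deriv.ax
      (t := Tm.par (Tm.pre a (Tm.var 0)) (Tm.pre b (Tm.var 1)))
      (u := Tm.add (Tm.pre a (Tm.par (Tm.var 0) (Tm.pre b (Tm.var 1))))
                (Tm.pre b (Tm.par (Tm.pre a (Tm.var 0)) (Tm.var 1))))
      (by simp only [ES, Set.mem_setOf_eq]
          refine Or.inr (Or.inr (Or.inr (Or.inr (Or.inr (Or.inr (Or.inr (Or.inr (Or.inr ⟨a, b, rfl⟩))))))))))
  simpa [tmSubst] using h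

lemma dSP2 (a : A) (x y z : Tm A) :
    Deriv (ES A) (.par (.pre a x) (.add y z))
      (.add (.add (.pre a (.par x (.add y z))) (.par (.pre a x) y)) (.par (.pre a x) z)) := by
  have h := Deriv.subst (E := ES A) (fun n => if n = 0 then x else if n = 1 then y else z)
    (Deriv.ax
      (t := Tm.par (Tm.pre a (Tm.var 0)) (Tm.add (Tm.var 1) (Tm.var 2)))
      (u := Tm.add (Tm.add
           (Tm.pre a (Tm.par (Tm.var 0) (Tm.add (Tm.var 1) (Tm.var 2))))
           (Tm.par (Tm.pre a (Tm.var 0)) (Tm.var 1)))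
           (Tm.par (Tm.pre a (Tm.var 0)) (Tm.var 2)))
      (by simp only [ES, Set.mem_setOf_eq]
          exact Or.inr (Or.inr (Or.inr (Or.inr (Or.inr (Or.inr (Or.inr (Or.inr (Or.inl ⟨a, rfl⟩))))))))))
  simpa [tmSubst] using h

lemma dSP1 (x y z w : Tm A) :
    Deriv (ES A) (.par (.add x y) (.add z w))
      (.add (.add (.add (.par x (.add z w)) (.par y (.add z w)))
        (.par (.add x y) z)) (.par (.add x y) w)) := by
  have h := Deriv.subst (E := ES A)
    (fun n => if n = 0 then x else if n = 1 then y else if n = 2 then z else w)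
    (Deriv.ax
      (t := Tm.par (Tm.add (Tm.var 0) (Tm.var 1)) (Tm.add (Tm.var 2) (Tm.var 3)))
      (u := Tm.add (Tm.add (Tm.add
           (Tm.par (Tm.var 0) (Tm.add (Tm.var 2) (Tm.var 3)))
           (Tm.par (Tm.var 1) (Tm.add (Tm.var 2) (Tm.var 3))))
           (Tm.par (Tm.add (Tm.var 0) (Tm.var 1)) (Tm.var 2)))
           (Tm.par (Tm.add (Tm.var 0) (Tm.var 1)) (Tm.var 3)))
      (by simp only [ES, Set.mem_setOf_eq]; tauto))
  simpa [tmSubst] using h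

lemma aux : ∀ n (p q : Tm A), ClosedTm p → ParFree p → ClosedTm q → ParFree q →
    sz p + sz q ≤ n →
    ∃ r : Tm A, ClosedTm r ∧ ParFree r ∧ Deriv (ES A) (Tm.par p q) r := by
  intro n
  induction n with
  | zero =>
    intro p q _ _ _ _ h
    exfalso
    cases p <;> simp [sz] at h
  | succ n ih =>
    intro p q hcp hfp hcq hfq hsz
    cases p with
    | var i => exact hcp.elim
    | par s t => exact hfp.elim
    | nil =>
      exact ⟨q, hcq, hfq, Deriv.trans (dP1 _ _) (dP0 q)⟩
    | pre a x =>
      cases q with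
      | var i => exact hcq.elim
      | par s t => exact hfq.elim
      | nil => exact ⟨.pre a x, hcp, hfp, dP0 _⟩
      | pre b y =>
        simp only [sz] at hsz
        obtain ⟨r1, hc1, hf1, hd1⟩ := ih x (.pre b y) hcp hfp hcq hfq (by simp only [ESElim.sz, sz]; omega)
        obtain ⟨r2, hc2, hf2, hd2⟩ := ih (.pre a x) y hcp hfp hcq hfq (by simp only [ESElim.sz, sz]; omega)
        exact ⟨.add (.pre a r1) (.pre b r2), ⟨hc1, hc2⟩, ⟨hf1, hf2⟩,
          Deriv.trans (dEL1 a b x y)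
            (Deriv.add (Deriv.pre a hd1) (Deriv.pre b hd2))⟩
      | add y z =>
        simp only [sz] at hsz
        obtain ⟨r1, hc1, hf1, hd1⟩ := ih x (.add y z) hcp hfp hcq hfq (by simp only [ESElim.sz, sz]; omega)
        obtain ⟨r2, hc2, hf2, hd2⟩ := ih (.pre a x) y hcp hfp hcq.1 hfq.1 (by simp only [ESElim.sz, sz]; omega)
        obtain ⟨r3, hc3, hf3, hd3⟩ := ih (.pre a x) z hcp hfp hcq.2 hfq.2 (by simp only [ESElim.sz, sz]; omega)
        exact ⟨.add (.add (.pre a r1) r2) r3, ⟨⟨hc1, hc2⟩, hc3⟩, ⟨⟨hf1, hf2⟩, hf3⟩,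
          Deriv.trans (dSP2 a x y z)
            (Deriv.add (Deriv.add (Deriv.pre a hd1) hd2) hd3)⟩
    | add x y =>
      cases q with
      | var i => exact hcq.elim
      | par s t => exact hfq.elim
      | nil => exact ⟨.add x y, hcp, hfp, dP0 _⟩
      | pre b z =>
        simp only [sz] at hsz
        obtain ⟨r1, hc1, hf1, hd1⟩ := ih z (.add x y) hcq hfq hcp hfp (by simp only [ESElim.sz, sz]; omega)
        obtain ⟨r2, hc2, hf2, hd2⟩ := ih (.pre b z) x hcq hfq hcp.1 hfp.1 (by simp only [ESElim.sz, sz]; omega)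
        obtain ⟨r3, hc3, hf3, hd3⟩ := ih (.pre b z) y hcq hfq hcp.2 hfp.2 (by simp only [ESElim.sz, sz]; omega)
        exact ⟨.add (.add (.pre b r1) r2) r3, ⟨⟨hc1, hc2⟩, hc3⟩, ⟨⟨hf1, hf2⟩, hf3⟩,
          Deriv.trans (dP1 _ _) (Deriv.trans (dSP2 b z x y)
            (Deriv.add (Deriv.add (Deriv.pre b hd1) hd2) hd3))⟩
      | add z w =>
        simp only [sz] at hsz
        obtain ⟨r1, hc1, hf1, hd1⟩ := ih x (.add z w) hcp.1 hfp.1 hcq hfq (by simp only [ESElim.sz, sz]; omega)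
        obtain ⟨r2, hc2, hf2, hd2⟩ := ih y (.add z w) hcp.2 hfp.2 hcq hfq (by simp only [ESElim.sz, sz]; omega)
        obtain ⟨r3, hc3, hf3, hd3⟩ := ih (.add x y) z hcp hfp hcq.1 hfq.1 (by simp only [ESElim.sz, sz]; omega)
        obtain ⟨r4, hc4, hf4, hd4⟩ := ih (.add x y) w hcp hfp hcq.2 hfq.2 (by simp only [ESElim.sz, sz]; omega)
        exact ⟨.add (.add (.add r1 r2) r3) r4, ⟨⟨⟨hc1, hc2⟩, hc3⟩, hc4⟩,
          ⟨⟨⟨hf1, hf2⟩, hf3⟩, hf4⟩,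
          Deriv.trans (dSP1 x y z w)
            (Deriv.add (Deriv.add (Deriv.add hd1 hd2) hd3) hd4)⟩

end ESElim

theorem ES_elimination {A : Type} [Fintype A] [Nonempty A]
    (p q : Tm A) (hp : ClosedTm p ∧ ParFree p) (hq : ClosedTm q ∧ ParFree q) :
    ∃ r : Tm A, ClosedTm r ∧ ParFree r ∧ Deriv (ES A) (Tm.par p q) r := by
  exact ESElim.aux (ESElim.sz p + ESElim.sz q) p q hp.1 hp.2 hq.1 hq.2 le_rfl
end

section
/- Let a ≠ b be actions, N > 1, and p_N = Σ_{i=1}^N b^i.a (where b^0 a = a.0 and b^{i+1}a = b.(b^i a)). If p and q are closed BCCSP_par processes that are not trace equivalent to 0 and p ‖ q is possible-futures equivalent to a.0 ‖ p_N, then either (p is possible-futures equivalent to a.0 and q is possible-futures equivalent to p_N) or (p is possible-futures equivalent to p_N and q is possible-futures equivalent to a.0). -/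
/-- The set of possible futures of a process. -/
def possibleFutures {A : Type} (p : Proc A) : Set (List A × Set (List A)) :=
  {x | ∃ p', TraceTo p x.1 p' ∧ x.2 = traces p'}

def PFEquiv {A : Type} (p q : Proc A) : Prop :=
  possibleFutures p = possibleFutures q

/-- `bpow a b i` is the process `b^i a`, i.e. `i` `b`-prefixes followed by `a.0`. -/
def bpow {A : Type} (a b : A) : ℕ → Proc A
  | 0 => Proc.pre a Proc.nil
  | i + 1 => Proc.pre b (bpow a b i)

def listSum {A : Type} : List (Proc A) → Proc A
  | [] => Proc.nil
  | t :: ts => Proc.add t (listSum ts)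

/-- `pN a b N` is `Σ_{i=1}^N b^i a`. -/
def pN {A : Type} (a b : A) (N : ℕ) : Proc A :=
  listSum ((List.range N).map fun i => bpow a b (i + 1))

/-- A process is "equivalent to 0" when it has the same traces as `0`. -/
def NilEquiv {A : Type} (p : Proc A) : Prop := traces p = traces (Proc.nil : Proc A)

/-- No subterm is a sum or a parallel composition with a 0-equivalent argument. -/
def noNilSummandFactor {A : Type} : Proc A → Prop
  | Proc.nil => True
  | Proc.pre _ p => noNilSummandFactor p
  | Proc.add p q =>
      noNilSummandFactor p ∧ noNilSummandFactor q ∧ ¬ NilEquiv p ∧ ¬ NilEquiv q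
  | Proc.par p q =>
      noNilSummandFactor p ∧ noNilSummandFactor q ∧ ¬ NilEquiv p ∧ ¬ NilEquiv q

namespace PFdec
open Proc

variable {A : Type} [DecidableEq A]

theorem traceTo_nil_eq {p r : Proc A} (h : TraceTo p [] r) : r = p := by
  cases h; rfl

theorem traceTo_trans {p q r : Proc A} {σ τ : List A} (h1 : TraceTo p σ q)
    (h2 : TraceTo q τ r) : TraceTo p (σ ++ τ) r := by
  induction h1 with
  | refl => simpa
  | step s _ ih => exact TraceTo.step s (ih h2)

theorem traceTo_append_split {p r : Proc A} {σ τ : List A}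
    (h : TraceTo p (σ ++ τ) r) : ∃ m, TraceTo p σ m ∧ TraceTo m τ r := by
  induction σ generalizing p with
  | nil => exact ⟨p, .refl p, h⟩
  | cons c σ ih =>
    cases h with
    | step s t =>
      obtain ⟨m, h1, h2⟩ := ih t
      exact ⟨m, .step s h1, h2⟩

theorem traceTo_single {p r : Proc A} {c : A} (h : TraceTo p [c] r) : Step p c r := by
  cases h with
  | step s t => rwa [traceTo_nil_eq t]

theorem traceTo_single_of_step {p r : Proc A} {c : A} (h : Step p c r) : TraceTo p [c] r :=
  .step h (.refl r)

theorem traceTo_cons_split {p r : Proc A} {c : A} {σ : List A}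
    (h : TraceTo p (c :: σ) r) : ∃ m, Step p c m ∧ TraceTo m σ r := by
  cases h with
  | step s t => exact ⟨_, s, t⟩

theorem mem_traces_nil (p : Proc A) : [] ∈ traces p := ⟨p, .refl p⟩

theorem nil_stuck : stuck (Proc.nil : Proc A) := by
  intro c r h; cases h

theorem stuck_traces {p : Proc A} (h : stuck p) : traces p = {([] : List A)} := by
  ext w
  constructor
  · rintro ⟨r, ht⟩
    cases ht with
    | refl => rfl
    | step s _ => exact absurd s (h _ _)
  · rintro rfl; exact mem_traces_nil p

theorem traces_nil_eq : traces (Proc.nil : Proc A) = {([] : List A)} :=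
  stuck_traces nil_stuck

theorem exists_step_of_not_nilEquiv {p : Proc A} (h : ¬ NilEquiv p) :
    ∃ c r, Step p c r := by
  by_contra hc
  push_neg at hc
  exact h (by rw [NilEquiv, traces_nil_eq, stuck_traces (fun c r => hc c r)])

/-- Interleaving of lists. -/
inductive Merge : List A → List A → List A → Prop where
  | nil : Merge [] [] []
  | left {s t w : List A} (c : A) : Merge s t w → Merge (c :: s) t (c :: w)
  | right {s t w : List A} (c : A) : Merge s t w → Merge s (c :: t) (c :: w)

theorem Merge.nil_left {t w : List A} (h : Merge [] t w) : w = t := by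
  induction t generalizing w with
  | nil => cases h; rfl
  | cons c t ih => cases h with
    | right _ h => rw [ih h]

theorem Merge.nil_right {s w : List A} (h : Merge s [] w) : w = s := by
  induction s generalizing w with
  | nil => cases h; rfl
  | cons c s ih => cases h with
    | left _ h => rw [ih h]

theorem merge_nil_left (t : List A) : Merge [] t t := by
  induction t with
  | nil => exact .nil
  | cons c t ih => exact .right c ih

theorem merge_nil_right (s : List A) : Merge s [] s := by
  induction s with
  | nil => exact .nil
  | cons c s ih => exact .left c ih

theorem Merge.count {s t w : List A} (h : Merge s t w) (c : A) :
    w.count c = s.count c + t.count c := by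
  induction h with
  | nil => simp
  | left d _ ih => simp only [List.count_cons, ih]; omega
  | right d _ ih => simp only [List.count_cons, ih]; omega

theorem Merge.single {c : A} {t w : List A} (h : Merge [c] t w) :
    ∃ u v, t = u ++ v ∧ w = u ++ c :: v := by
  induction t generalizing w with
  | nil => cases h with
    | left _ h => exact ⟨[], [], rfl, by simp [h.nil_left]⟩
  | cons d t ih =>
    cases h with
    | left _ h => exact ⟨[], d :: t, rfl, by simp [h.nil_left]⟩
    | right _ h =>
      obtain ⟨u, v, rfl, rfl⟩ := ih h
      exact ⟨d :: u, v, rfl, rfl⟩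

theorem merge_of_split {c : A} (u v : List A) : Merge [c] (u ++ v) (u ++ c :: v) := by
  induction u with
  | nil => exact .left c (merge_nil_left v)
  | cons d u ih => exact .right d ih

theorem traceTo_par_of_merge {p p₁ q q₁ : Proc A} {σ τ w : List A}
    (hm : Merge σ τ w) (hp : TraceTo p σ p₁) (hq : TraceTo q τ q₁) :
    TraceTo (Proc.par p q) w (Proc.par p₁ q₁) := by
  induction hm generalizing p q with
  | nil => rw [traceTo_nil_eq hp, traceTo_nil_eq hq]; exact .refl _
  | left c _ ih =>
    obtain ⟨m, s, t⟩ := traceTo_cons_split hp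
    exact .step (.parL _ s) (ih t hq)
  | right c _ ih =>
    obtain ⟨m, s, t⟩ := traceTo_cons_split hq
    exact .step (.parR _ s) (ih hp t)

theorem traceTo_parL {p p₁ : Proc A} (q : Proc A) {σ : List A} (hp : TraceTo p σ p₁) :
    TraceTo (Proc.par p q) σ (Proc.par p₁ q) :=
  traceTo_par_of_merge (merge_nil_right σ) hp (.refl q)

theorem traceTo_parR (p : Proc A) {q q₁ : Proc A} {τ : List A} (hq : TraceTo q τ q₁) :
    TraceTo (Proc.par p q) τ (Proc.par p q₁) :=
  traceTo_par_of_merge (merge_nil_left τ) (.refl p) hq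

theorem traceTo_par_inv' : ∀ {s : Proc A} {w : List A} {r : Proc A}, TraceTo s w r →
    ∀ {p q : Proc A}, s = Proc.par p q →
    ∃ p₁ q₁ σ τ, r = Proc.par p₁ q₁ ∧ TraceTo p σ p₁ ∧ TraceTo q τ q₁ ∧ Merge σ τ w := by
  intro s w r h
  induction h with
  | refl s =>
    rintro p q rfl
    exact ⟨p, q, [], [], rfl, .refl p, .refl q, .nil⟩
  | step st _ ih =>
    rintro p q rfl
    cases st with
    | parL _ s1 =>
      obtain ⟨p₁, q₁, σ, τ, rfl, h1, h2, hm⟩ := ih rfl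
      exact ⟨p₁, q₁, _ :: σ, τ, rfl, .step s1 h1, h2, .left _ hm⟩
    | parR _ s1 =>
      obtain ⟨p₁, q₁, σ, τ, rfl, h1, h2, hm⟩ := ih rfl
      exact ⟨p₁, q₁, σ, _ :: τ, rfl, h1, .step s1 h2, .right _ hm⟩

theorem traceTo_par_inv {p q : Proc A} {w : List A} {r : Proc A}
    (h : TraceTo (Proc.par p q) w r) :
    ∃ p₁ q₁ σ τ, r = Proc.par p₁ q₁ ∧ TraceTo p σ p₁ ∧ TraceTo q τ q₁ ∧ Merge σ τ w :=
  traceTo_par_inv' h rfl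

end PFdec


namespace PFdec
open Proc

section Rep
variable {A : Type} [DecidableEq A] {a b : A}

/-- `bk b i` is `b^i`. -/
abbrev bk (b : A) (i : ℕ) : List A := List.replicate i b

theorem count_bk (hab : a ≠ b) (i : ℕ) : (bk b i).count a = 0 := by
  simp only [bk, List.count_replicate, beq_iff_eq, if_neg (Ne.symm hab)]

theorem count_bk_self (i : ℕ) : (bk b i).count b = i := by
  simp [List.count_replicate]

theorem bk_injective {i j : ℕ} (h : bk b i = bk b j) : i = j := by
  have := congrArg List.length h; simpa using this

/-- splitting of `b^i` into two pieces -/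
theorem split_bk {u v : List A} {i : ℕ} (h : u ++ v = bk b i) :
    ∃ s, s ≤ i ∧ u = bk b s ∧ v = bk b (i - s) := by
  induction u generalizing i with
  | nil =>
    exact ⟨0, Nat.zero_le _, rfl, by simpa using h⟩
  | cons c u ih =>
    cases i with
    | zero => simp at h
    | succ i =>
      simp only [bk, List.replicate_succ, List.cons_append, List.cons.injEq] at h
      obtain ⟨rfl, h2⟩ := h
      obtain ⟨s, hs, rfl, rfl⟩ := ih h2
      exact ⟨s + 1, by omega, by simp [List.replicate_succ], by congr 1; omega⟩

/-- splitting of `b^i ++ [a]` -/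
theorem split_bka {u v : List A} {i : ℕ} (h : u ++ v = bk b i ++ [a]) :
    (∃ s, s ≤ i ∧ u = bk b s ∧ v = bk b (i - s) ++ [a]) ∨
    (u = bk b i ++ [a] ∧ v = []) := by
  rcases v.eq_nil_or_concat with rfl | ⟨v', c, rfl⟩
  · right; constructor
    · simpa using h
    · rfl
  · left
    simp only [List.concat_eq_append, ← List.append_assoc] at h
    have hc : c = a := by
      have := congrArg (fun l => l.getLast?) h
      simpa using this
    subst hc
    have h2 : u ++ v' = bk b i := by
      have := congrArg (fun l => l.dropLast) h
      simpa using this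
    obtain ⟨s, hs, rfl, rfl⟩ := split_bk h2
    exact ⟨s, hs, rfl, by simp⟩

/-- the only way to split `b^k ++ [a]` at an `a` -/
theorem split_at_a_bka (hab : a ≠ b) {u v : List A} {k : ℕ}
    (h : u ++ a :: v = bk b k ++ [a]) : u = bk b k ∧ v = [] := by
  have h' := split_bka (a := a) (b := b) (v := a :: v) h
  rcases h' with ⟨s, hs, rfl, heq⟩ | ⟨_, heq⟩
  · cases hks : k - s with
    | zero =>
      rw [hks] at heq; simp at heq
      obtain ⟨rfl, rfl⟩ := heq
      have : s = k := by omega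
      subst this; exact ⟨rfl, rfl⟩
    | succ m =>
      rw [hks] at heq
      simp only [bk, List.replicate_succ, List.cons_append, List.cons.injEq] at heq
      exact absurd heq.1 hab
  · simp at heq

/-- the only way to split `b^x ++ a :: b^y` at an `a` -/
theorem split_at_a_bab (hab : a ≠ b) {u v : List A} {x y : ℕ}
    (h : u ++ a :: v = bk b x ++ a :: bk b y) : u = bk b x ∧ v = bk b y := by
  induction x generalizing u with
  | zero =>
    simp only [bk, List.replicate_zero, List.nil_append] at h
    cases u with
    | nil => simp_all
    | cons c u =>
      simp only [List.cons_append, List.cons.injEq] at h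
      obtain ⟨hc, h2⟩ := h
      exfalso
      have hcount : (u ++ a :: v).count a = 0 := by
        rw [h2]; exact count_bk hab y
      simp [List.count_append, List.count_cons] at hcount
  | succ x ih =>
    simp only [bk, List.replicate_succ, List.cons_append] at h
    cases u with
    | nil =>
      simp at h; exact absurd h.1 hab
    | cons c u =>
      simp only [List.cons_append, List.cons.injEq] at h
      obtain ⟨rfl, h2⟩ := h
      obtain ⟨rfl, rfl⟩ := ih h2
      exact ⟨by simp [List.replicate_succ], rfl⟩

end Rep
end PFdec


namespace PFdec
open Proc

section Char
variable {A : Type} [DecidableEq A]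

theorem traceTo_stuck {p : Proc A} (hs : stuck p) {w : List A} {r : Proc A}
    (h : TraceTo p w r) : w = [] ∧ r = p := by
  cases h with
  | refl => exact ⟨rfl, rfl⟩
  | step s _ => exact absurd s (hs _ _)

theorem step_pre_inv {c d : A} {x r : Proc A} (h : Step (Proc.pre c x) d r) :
    d = c ∧ r = x := by
  cases h; exact ⟨rfl, rfl⟩

theorem bpow_trace_inv {a b : A} {k : ℕ} {w : List A} {r : Proc A}
    (h : TraceTo (bpow a b k) w r) :
    (∃ i, i ≤ k ∧ w = bk b i ∧ r = bpow a b (k - i)) ∨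
    (w = bk b k ++ [a] ∧ r = Proc.nil) := by
  induction k generalizing w r with
  | zero =>
    cases h with
    | refl => exact .inl ⟨0, le_refl 0, rfl, rfl⟩
    | step s t =>
      obtain ⟨rfl, rfl⟩ := step_pre_inv s
      obtain ⟨rfl, rfl⟩ := traceTo_stuck nil_stuck t
      exact .inr ⟨rfl, rfl⟩
  | succ k ih =>
    cases h with
    | refl => exact .inl ⟨0, Nat.zero_le _, rfl, rfl⟩
    | step s t =>
      obtain ⟨rfl, rfl⟩ := step_pre_inv s
      rcases ih t with ⟨i, hi, rfl, rfl⟩ | ⟨rfl, rfl⟩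
      · exact .inl ⟨i + 1, by omega, by simp [List.replicate_succ], by congr 1; omega⟩
      · exact .inr ⟨by simp [List.replicate_succ], rfl⟩

theorem bpow_trace_bk (a b : A) {i k : ℕ} (hik : i ≤ k) :
    TraceTo (bpow a b k) (bk b i) (bpow a b (k - i)) := by
  induction i generalizing k with
  | zero => exact .refl _
  | succ i ih =>
    obtain ⟨k', rfl⟩ : ∃ k', k = k' + 1 := ⟨k - 1, by omega⟩
    have h2 := ih (k := k') (by omega)
    have : TraceTo (bpow a b (k' + 1)) (b :: bk b i) (bpow a b (k' - i)) :=
      .step (Step.pre b _) h2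
    simpa [List.replicate_succ, Nat.succ_sub_succ] using this

theorem bpow_trace_full (a b : A) (k : ℕ) :
    TraceTo (bpow a b k) (bk b k ++ [a]) Proc.nil := by
  induction k with
  | zero => exact traceTo_single_of_step (Step.pre a _)
  | succ k ih =>
    have : TraceTo (bpow a b (k + 1)) (b :: (bk b k ++ [a])) Proc.nil :=
      .step (Step.pre b _) ih
    simpa [List.replicate_succ] using this

theorem step_listSum_inv {l : List (Proc A)} {c : A} {r : Proc A}
    (h : Step (listSum l) c r) : ∃ t ∈ l, Step t c r := by
  induction l with
  | nil => cases h
  | cons x l ih =>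
    cases h with
    | addL _ h => exact ⟨x, by simp, h⟩
    | addR _ h =>
      obtain ⟨t, ht, hs⟩ := ih h
      exact ⟨t, by simp [ht], hs⟩

theorem step_listSum_of {l : List (Proc A)} {t : Proc A} (ht : t ∈ l) {c : A} {r : Proc A}
    (h : Step t c r) : Step (listSum l) c r := by
  induction l with
  | nil => simp at ht
  | cons x l ih =>
    rcases List.mem_cons.mp ht with rfl | ht
    · exact .addL _ h
    · exact .addR _ (ih ht)

theorem step_pN_inv {a b : A} {N : ℕ} {c : A} {r : Proc A} (h : Step (pN a b N) c r) :
    c = b ∧ ∃ m, m < N ∧ r = bpow a b m := by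
  obtain ⟨t, ht, hs⟩ := step_listSum_inv h
  simp only [pN, List.mem_map, List.mem_range] at ht
  obtain ⟨i, hi, rfl⟩ := ht
  obtain ⟨rfl, rfl⟩ := step_pre_inv hs
  exact ⟨rfl, i, hi, rfl⟩

theorem step_pN_of (a b : A) {N m : ℕ} (hm : m < N) :
    Step (pN a b N) b (bpow a b m) := by
  refine step_listSum_of (t := bpow a b (m + 1)) ?_ (Step.pre b _)
  simp only [List.mem_map, List.mem_range]
  exact ⟨m, hm, rfl⟩

theorem pN_trace_inv {a b : A} {N : ℕ} {w : List A} {r : Proc A}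
    (h : TraceTo (pN a b N) w r) :
    (w = [] ∧ r = pN a b N) ∨
    (∃ i k, 1 ≤ i ∧ i ≤ N ∧ k ≤ N - i ∧ w = bk b i ∧ r = bpow a b k) ∨
    (∃ i, 1 ≤ i ∧ i ≤ N ∧ w = bk b i ++ [a] ∧ r = Proc.nil) := by
  cases h with
  | refl => exact .inl ⟨rfl, rfl⟩
  | step s t =>
    obtain ⟨rfl, m, hm, rfl⟩ := step_pN_inv s
    rcases bpow_trace_inv t with ⟨i, hi, rfl, rfl⟩ | ⟨rfl, rfl⟩
    · refine .inr (.inl ⟨i + 1, m - i, by omega, by omega, by omega,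
        by simp [List.replicate_succ], rfl⟩)
    · exact .inr (.inr ⟨m + 1, by omega, by omega, by simp [List.replicate_succ], rfl⟩)

theorem pN_trace_bk (a b : A) {N i k : ℕ} (hi1 : 1 ≤ i) (hiN : i ≤ N) (hk : k ≤ N - i) :
    TraceTo (pN a b N) (bk b i) (bpow a b k) := by
  have hs : Step (pN a b N) b (bpow a b (k + i - 1)) := step_pN_of a b (by omega)
  have ht : TraceTo (bpow a b (k + i - 1)) (bk b (i - 1)) (bpow a b k) := by
    have := bpow_trace_bk a b (i := i - 1) (k := k + i - 1) (by omega)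
    have he : k + i - 1 - (i - 1) = k := by omega
    rwa [he] at this
  have : TraceTo (pN a b N) (b :: bk b (i - 1)) (bpow a b k) := .step hs ht
  have he : b :: bk b (i - 1) = bk b i := by
    obtain ⟨i', rfl⟩ : ∃ i', i = i' + 1 := ⟨i - 1, by omega⟩
    simp [List.replicate_succ]
  rwa [he] at this

theorem pN_trace_full (a b : A) {N i : ℕ} (hi1 : 1 ≤ i) (hiN : i ≤ N) :
    TraceTo (pN a b N) (bk b i ++ [a]) Proc.nil := by
  have hs : Step (pN a b N) b (bpow a b (i - 1)) := step_pN_of a b (by omega)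
  have : TraceTo (pN a b N) (b :: (bk b (i - 1) ++ [a])) Proc.nil :=
    .step hs (bpow_trace_full a b (i - 1))
  have he : b :: (bk b (i - 1) ++ [a]) = bk b i ++ [a] := by
    obtain ⟨i', rfl⟩ : ∃ i', i = i' + 1 := ⟨i - 1, by omega⟩
    simp [List.replicate_succ]
  rwa [he] at this

end Char
end PFdec


namespace PFdec
open Proc

section Sets
variable {A : Type} [DecidableEq A]

def PkSet (a b : A) (k : ℕ) : Set (List A) :=
  {w | (∃ i, i ≤ k ∧ w = bk b i) ∨ w = bk b k ++ [a]}

theorem traces_bpow (a b : A) (k : ℕ) : traces (bpow a b k) = PkSet a b k := by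
  ext w
  constructor
  · rintro ⟨r, h⟩
    rcases bpow_trace_inv h with ⟨i, hi, rfl, _⟩ | ⟨rfl, _⟩
    · exact .inl ⟨i, hi, rfl⟩
    · exact .inr rfl
  · rintro (⟨i, hi, rfl⟩ | rfl)
    · exact ⟨_, bpow_trace_bk a b hi⟩
    · exact ⟨_, bpow_trace_full a b k⟩

def TNSet (a b : A) (N : ℕ) : Set (List A) :=
  {w | (∃ i, i ≤ N ∧ w = bk b i) ∨ (∃ i, 1 ≤ i ∧ i ≤ N ∧ w = bk b i ++ [a])}

theorem traces_pN (a b : A) (N : ℕ) : traces (pN a b N) = TNSet a b N := by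
  ext w
  constructor
  · rintro ⟨r, h⟩
    rcases pN_trace_inv h with ⟨rfl, _⟩ | ⟨i, k, h1, h2, _, rfl, _⟩ | ⟨i, h1, h2, rfl, _⟩
    · exact .inl ⟨0, Nat.zero_le _, rfl⟩
    · exact .inl ⟨i, h2, rfl⟩
    · exact .inr ⟨i, h1, h2, rfl⟩
  · rintro (⟨i, hi, rfl⟩ | ⟨i, h1, h2, rfl⟩)
    · rcases Nat.eq_zero_or_pos i with rfl | hpos
      · exact ⟨_, .refl _⟩
      · exact ⟨_, pN_trace_bk a b hpos hi (Nat.zero_le _)⟩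
    · exact ⟨_, pN_trace_full a b h1 h2⟩

theorem traces_par_stuckL {x y : Proc A} (hx : stuck x) :
    traces (Proc.par x y) = traces y := by
  ext w
  constructor
  · rintro ⟨r, h⟩
    obtain ⟨x₁, y₁, σ, τ, rfl, h1, h2, hm⟩ := traceTo_par_inv h
    obtain ⟨rfl, rfl⟩ := traceTo_stuck hx h1
    exact ⟨y₁, hm.nil_left ▸ h2⟩
  · rintro ⟨y₁, h⟩
    exact ⟨_, traceTo_parR x h⟩

/-- all possible single-`a` insertions into a set of words -/
def aIns (a : A) (S : Set (List A)) : Set (List A) :=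
  {w | w ∈ S ∨ ∃ u v, u ++ v ∈ S ∧ w = u ++ a :: v}

theorem traces_par_aIns {a : A} {x y : Proc A}
    (hx : ∀ σ ∈ traces x, σ = [] ∨ σ = [a]) (hxa : [a] ∈ traces x) :
    traces (Proc.par x y) = aIns a (traces y) := by
  ext w
  constructor
  · rintro ⟨r, h⟩
    obtain ⟨x₁, y₁, σ, τ, rfl, h1, h2, hm⟩ := traceTo_par_inv h
    rcases hx σ ⟨x₁, h1⟩ with rfl | rfl
    · exact .inl ⟨y₁, hm.nil_left ▸ h2⟩
    · obtain ⟨u, v, rfl, rfl⟩ := hm.single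
      exact .inr ⟨u, v, ⟨y₁, h2⟩, rfl⟩
  · rintro (⟨y₁, h⟩ | ⟨u, v, ⟨y₁, h⟩, rfl⟩)
    · exact ⟨_, traceTo_parR x h⟩
    · obtain ⟨x', hx'⟩ := hxa
      exact ⟨_, traceTo_par_of_merge (merge_of_split u v) hx' h⟩

theorem pre_a_nil_traces_shape {a b : A} {σ : List A}
    (hσ : σ ∈ traces (Proc.pre a Proc.nil)) : σ = [] ∨ σ = [a] := by
  obtain ⟨r, h⟩ := hσ
  rcases bpow_trace_inv (a := a) (b := b) (k := 0) h with ⟨i, hi, rfl, _⟩ | ⟨rfl, _⟩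
  · left; interval_cases i; rfl
  · right; rfl

theorem mem_a_pre_a_nil {a : A} : [a] ∈ traces (Proc.pre a Proc.nil) :=
  ⟨_, traceTo_single_of_step (Step.pre a _)⟩

theorem count_mem_PkSet {a b : A} (hab : a ≠ b) {k : ℕ} {w : List A}
    (hw : w ∈ PkSet a b k) : w.count a ≤ 1 := by
  rcases hw with ⟨i, hi, rfl⟩ | rfl
  · simp [count_bk hab]
  · simp [List.count_append, count_bk hab]

theorem count_mem_aIns {a : A} {S : Set (List A)} {c : ℕ}
    (hS : ∀ v ∈ S, v.count a ≤ c) {w : List A} (hw : w ∈ aIns a S) :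
    w.count a ≤ c + 1 := by
  rcases hw with hw | ⟨u, v, huv, rfl⟩
  · exact le_trans (hS w hw) (Nat.le_succ c)
  · have := hS _ huv
    simp only [List.count_append, List.count_cons] at *
    simp
    omega

/-- splitting `a :: (b^k ++ [a])` at an `a` -/
theorem split_at_a_abka {a b : A} (hab : a ≠ b) {u v : List A} {k : ℕ}
    (h : u ++ a :: v = a :: (bk b k ++ [a])) :
    (u = [] ∧ v = bk b k ++ [a]) ∨ (u = a :: bk b k ∧ v = []) := by
  cases u with
  | nil =>
    left
    simpa using h
  | cons c u =>
    simp only [List.cons_append, List.cons.injEq] at h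
    obtain ⟨rfl, h2⟩ := h
    obtain ⟨rfl, rfl⟩ := split_at_a_bka hab h2
    right; exact ⟨rfl, rfl⟩

theorem aIns_cancel {a b : A} (hab : a ≠ b) {k : ℕ} {X : Set (List A)}
    (h : aIns a X = aIns a (PkSet a b k)) : X = PkSet a b k := by
  have hPk2 : ∀ w ∈ aIns a (PkSet a b k), w.count a ≤ 2 :=
    fun w hw => count_mem_aIns (fun v hv => count_mem_PkSet hab hv) hw
  -- every member of X has at most one `a`
  have hX1 : ∀ w ∈ X, w.count a ≤ 1 := by
    intro w hw
    have : (a :: w) ∈ aIns a X := .inr ⟨[], w, hw, rfl⟩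
    have h2 := hPk2 _ (h ▸ this)
    simp [List.count_cons] at h2
    omega
  -- count-0 members of X are exactly the b-powers up to k
  have hX0 : ∀ w ∈ X, w.count a = 0 → ∃ i, i ≤ k ∧ w = bk b i := by
    intro w hw hc
    have : w ∈ aIns a (PkSet a b k) := h ▸ (.inl hw)
    rcases this with hw' | ⟨u, v, _, rfl⟩
    · rcases hw' with ⟨i, hi, rfl⟩ | rfl
      · exact ⟨i, hi, rfl⟩
      · exfalso
        simp [List.count_append, List.count_cons, count_bk hab] at hc
    · exfalso
      simp [List.count_append, List.count_cons] at hc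
  -- count-1 members of X equal b^k ++ [a]
  have hX1' : ∀ w ∈ X, w.count a = 1 → w = bk b k ++ [a] := by
    intro w hw hc
    have haw : (a :: w) ∈ aIns a (PkSet a b k) := h ▸ (.inr ⟨[], w, hw, rfl⟩)
    rcases haw with hw' | ⟨u, v, huv, heq⟩
    · exfalso
      have := count_mem_PkSet hab hw'
      simp [List.count_cons, hc] at this
    · -- a :: w = u ++ a :: v with u ++ v ∈ PkSet
      have hcuv : (u ++ v).count a = 1 := by
        have h1 : (a :: w).count a = (u ++ a :: v).count a := by rw [heq]
        simp only [List.count_append, List.count_cons] at h1 ⊢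
        simp at h1 ⊢
        omega
      have huv' : u ++ v = bk b k ++ [a] := by
        rcases huv with ⟨i, _, he⟩ | he
        · exfalso
          rw [he] at hcuv
          rw [count_bk hab] at hcuv
          omega
        · exact he
      cases u with
      | nil =>
        simp only [List.nil_append] at heq huv'
        have : w = v := by simpa using heq
        rw [this, huv']
      | cons c u' =>
        simp only [List.cons_append, List.cons.injEq] at heq
        obtain ⟨rfl, rfl⟩ := heq
        -- u' ++ v = bk b k ++ [a] with w = u' ++ a :: v; also c = a
        -- head of bk b k ++ [a] ... u ++ v started with a
        rcases k with _ | k'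
        · -- k = 0 : a :: u' ++ v = [a]  (huv' : (a :: u') ++ v = [a])
          simp only [bk, List.replicate_zero, List.nil_append] at huv' ⊢
          have : u' = [] ∧ v = [] := by
            cases u' with
            | nil => exact ⟨rfl, by simpa using huv'⟩
            | cons d u'' => simp at huv'
          obtain ⟨rfl, rfl⟩ := this
          rfl
        · exfalso
          simp only [bk, List.replicate_succ, List.cons_append, List.cons.injEq] at huv'
          exact hab huv'.1
  -- b^k ++ [a] is a member of X
  have hbka : bk b k ++ [a] ∈ X := by
    have : a :: (bk b k ++ [a]) ∈ aIns a X := by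
      rw [h]
      exact .inr ⟨[], bk b k ++ [a], .inr rfl, rfl⟩
    rcases this with hmem | ⟨u, v, huv, heq⟩
    · exfalso
      have := hX1 _ hmem
      simp [List.count_cons, List.count_append, count_bk hab] at this
    · rcases split_at_a_abka hab heq.symm with ⟨rfl, rfl⟩ | ⟨rfl, rfl⟩
      · simpa using huv
      · -- u ++ v = a :: bk b k ∈ X, count 1, so equals bk b k ++ [a]
        have hm : a :: bk b k ∈ X := by simpa using huv
        have hc : (a :: bk b k).count a = 1 := by
          simp [List.count_cons, count_bk hab]
        have := hX1' _ hm hc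
        rwa [← this]
  -- conclude
  ext w
  constructor
  · intro hw
    have hc := hX1 w hw
    interval_cases hcw : w.count a
    · obtain ⟨i, hi, rfl⟩ := hX0 w hw hcw
      exact .inl ⟨i, hi, rfl⟩
    · exact .inr (hX1' w hw hcw)
  · rintro (⟨i, hi, rfl⟩ | rfl)
    · -- bk b i ∈ aIns a X, count 0, so in X
      have : bk b i ∈ aIns a X := h ▸ (.inl (.inl ⟨i, hi, rfl⟩))
      rcases this with hw | ⟨u, v, _, heq⟩
      · exact hw
      · exfalso
        have : (bk b i).count a = 0 := count_bk hab i
        rw [heq] at this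
        simp [List.count_append, List.count_cons] at this
    · exact hbka

/-- characterisation of the traces of `a.0 ‖ p_N` (forward direction) -/
theorem L_char {a b : A} (hab : a ≠ b) {N : ℕ} {w : List A}
    (hw : w ∈ traces (Proc.par (Proc.pre a Proc.nil) (pN a b N))) :
    (∃ i, i ≤ N ∧ w = bk b i) ∨
    (∃ x y, x + y ≤ N ∧ w = bk b x ++ a :: bk b y) ∨
    (∃ x y, 1 ≤ x + y ∧ x + y ≤ N ∧ w = bk b x ++ a :: (bk b y ++ [a])) := by
  obtain ⟨r, h⟩ := hw
  obtain ⟨x₁, y₁, σ, τ, rfl, h1, h2, hm⟩ := traceTo_par_inv h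
  have hτ : τ ∈ TNSet a b N := (traces_pN a b N) ▸ ⟨y₁, h2⟩
  rcases pre_a_nil_traces_shape (b := b) ⟨x₁, h1⟩ with rfl | rfl
  · -- σ = [], w = τ
    have hwτ : w = τ := hm.nil_left
    subst hwτ
    rcases hτ with ⟨i, hi, rfl⟩ | ⟨i, hi1, hi2, rfl⟩
    · exact .inl ⟨i, hi, rfl⟩
    · exact .inr (.inl ⟨i, 0, by omega, by simp⟩)
  · -- σ = [a]
    obtain ⟨u, v, rfl, rfl⟩ := hm.single
    rcases hτ with ⟨i, hi, he⟩ | ⟨i, hi1, hi2, he⟩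
    · obtain ⟨s, hs, rfl, rfl⟩ := split_bk he
      exact .inr (.inl ⟨s, i - s, by omega, rfl⟩)
    · rcases split_bka he with ⟨s, hs, rfl, rfl⟩ | ⟨rfl, rfl⟩
      · exact .inr (.inr ⟨s, i - s, by omega, by omega, rfl⟩)
      · refine .inr (.inr ⟨i, 0, by omega, by omega, by simp⟩)

end Sets
end PFdec


namespace PFdec
open Proc

section Main
variable {A : Type} [DecidableEq A]

theorem pf_elim {p q : Proc A} (h : PFEquiv p q) {w : List A} {r : Proc A}
    (ht : TraceTo p w r) : ∃ r', TraceTo q w r' ∧ traces r = traces r' := by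
  have hm : (w, traces r) ∈ possibleFutures q := h ▸ ⟨r, ht, rfl⟩
  obtain ⟨r', h1, h2⟩ := hm
  exact ⟨r', h1, h2⟩

theorem Merge.comm {s t w : List A} (h : Merge s t w) : Merge t s w := by
  induction h with
  | nil => exact .nil
  | left c _ ih => exact .right c ih
  | right c _ ih => exact .left c ih

theorem merge_append (s t : List A) : Merge s t (s ++ t) := by
  induction s with
  | nil => exact merge_nil_left t
  | cons c s ih => exact .left c ih

theorem traces_par_comm (p q : Proc A) : traces (Proc.par p q) = traces (Proc.par q p) := by
  have key : ∀ x y : Proc A, traces (Proc.par x y) ⊆ traces (Proc.par y x) := by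
    rintro x y w ⟨r, h⟩
    obtain ⟨x₁, y₁, σ, τ, rfl, h1, h2, hm⟩ := traceTo_par_inv h
    exact ⟨_, traceTo_par_of_merge hm.comm h2 h1⟩
  exact subset_antisymm (key p q) (key q p)

theorem pf_par_comm (p q : Proc A) :
    possibleFutures (Proc.par p q) = possibleFutures (Proc.par q p) := by
  have key : ∀ x y : Proc A, possibleFutures (Proc.par x y) ⊆ possibleFutures (Proc.par y x) := by
    rintro x y ⟨w, X⟩ ⟨r, hr, hX⟩
    obtain ⟨x₁, y₁, σ, τ, rfl, h1, h2, hm⟩ := traceTo_par_inv hr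
    exact ⟨Proc.par y₁ x₁, traceTo_par_of_merge hm.comm h2 h1,
      hX.trans (traces_par_comm x₁ y₁)⟩
  exact subset_antisymm (key p q) (key q p)

theorem step_a_target_inv {a b : A} (hab : a ≠ b) {N : ℕ} {r : Proc A}
    (h : Step (Proc.par (Proc.pre a Proc.nil) (pN a b N)) a r) :
    r = Proc.par Proc.nil (pN a b N) := by
  cases h with
  | parL _ s => obtain ⟨-, rfl⟩ := step_pre_inv s; rfl
  | parR _ s => obtain ⟨hc, -⟩ := step_pN_inv s; exact absurd hc hab

theorem count_word2 {a b : A} (hab : a ≠ b) (x y : ℕ) :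
    (bk b x ++ a :: bk b y).count a = 1 := by
  simp [List.count_append, List.count_cons, count_bk hab]

theorem count_word3 {a b : A} (hab : a ≠ b) (x y : ℕ) :
    (bk b x ++ a :: (bk b y ++ [a])).count a = 2 := by
  simp [List.count_append, List.count_cons, count_bk hab]

theorem first_occ_split {a : A} : ∀ {u₁ : List A} {v₁ u₂ v₂ : List A},
    u₁ ++ a :: v₁ = u₂ ++ a :: v₂ → u₁.count a = 0 → u₂.count a = 0 →
    u₁ = u₂ ∧ v₁ = v₂ := by
  intro u₁
  induction u₁ with
  | nil =>
    intro v₁ u₂ v₂ he _ hc₂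
    cases u₂ with
    | nil => simpa using he
    | cons c u₂' =>
      simp only [List.nil_append, List.cons_append, List.cons.injEq] at he
      obtain ⟨rfl, -⟩ := he
      simp [List.count_cons] at hc₂
  | cons c u₁' ih =>
    intro v₁ u₂ v₂ he hc₁ hc₂
    cases u₂ with
    | nil =>
      simp only [List.cons_append, List.nil_append, List.cons.injEq] at he
      obtain ⟨rfl, -⟩ := he
      simp [List.count_cons] at hc₁
    | cons d u₂' =>
      simp only [List.cons_append, List.cons.injEq] at he
      obtain ⟨rfl, he2⟩ := he
      simp only [List.count_cons] at hc₁ hc₂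
      have h1 : u₁'.count a = 0 := by omega
      have h2 : u₂'.count a = 0 := by omega
      obtain ⟨rfl, rfl⟩ := ih he2 h1 h2
      exact ⟨rfl, rfl⟩

theorem bk_ne_nil_of_pos {b : A} {i : ℕ} (hi : 1 ≤ i) : (bk b i : List A) ≠ [] := by
  simp [bk, List.replicate_eq_nil_iff]
  omega

/-- The main one-sided lemma. -/
theorem aux_main {a b : A} (hab : a ≠ b) {N : ℕ} (hN1 : 1 ≤ N)
    {p q : Proc A} (hq0 : ¬ NilEquiv q)
    (h : PFEquiv (Proc.par p q) (Proc.par (Proc.pre a Proc.nil) (pN a b N)))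
    (hpa : ∃ p', Step p a p') :
    PFEquiv p (Proc.pre a Proc.nil) ∧ PFEquiv q (pN a b N) := by
  obtain ⟨p₀, hp₀⟩ := hpa
  -- traces of the composition
  have htr : traces (Proc.par p q) = traces (Proc.par (Proc.pre a Proc.nil) (pN a b N)) := by
    obtain ⟨r', h1, h2⟩ := pf_elim h (.refl _)
    rwa [traceTo_nil_eq h1] at h2
  have hL : ∀ w ∈ traces (Proc.par p q),
      (∃ i, i ≤ N ∧ w = bk b i) ∨
      (∃ x y, x + y ≤ N ∧ w = bk b x ++ a :: bk b y) ∨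
      (∃ x y, 1 ≤ x + y ∧ x + y ≤ N ∧ w = bk b x ++ a :: (bk b y ++ [a])) :=
    fun w hw => L_char hab (htr ▸ hw)
  -- (1) every a-residual of p leaves exactly the traces of pN
  have h1 : ∀ p', Step p a p' → traces (Proc.par p' q) = traces (pN a b N) := by
    intro p' hs
    obtain ⟨r', ht', he⟩ := pf_elim h (traceTo_single_of_step (Step.parL q hs))
    rw [step_a_target_inv hab (traceTo_single ht')] at he
    rw [he, traces_par_stuckL nil_stuck]
  -- (2) q has no a-step
  have hqa : ∀ q', ¬ Step q a q' := by
    intro q' hs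
    have h1q : traces (Proc.par p q') = traces (pN a b N) := by
      obtain ⟨r', ht', he⟩ := pf_elim h (traceTo_single_of_step (Step.parR p hs))
      rw [step_a_target_inv hab (traceTo_single ht')] at he
      rw [he, traces_par_stuckL nil_stuck]
    have hmem : [a] ∈ traces (Proc.par p q') :=
      ⟨_, traceTo_parL q' (traceTo_single_of_step hp₀)⟩
    rw [h1q, traces_pN] at hmem
    rcases hmem with ⟨i, _, he⟩ | ⟨i, hi1, _, he⟩
    · have hc := congrArg (List.count a) he
      rw [count_bk hab] at hc
      simp [List.count_cons] at hc
    · have hc := congrArg List.length he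
      simp [List.length_append] at hc
      omega
  -- (3) q has a b-step
  obtain ⟨c, q₁, hqc⟩ := exists_step_of_not_nilEquiv hq0
  have hcb : c = b := by
    have hmem : [c] ∈ traces (Proc.par p q) :=
      ⟨_, traceTo_parR p (traceTo_single_of_step hqc)⟩
    rcases hL _ hmem with ⟨i, _, he⟩ | ⟨x, y, _, he⟩ | ⟨x, y, _, _, he⟩
    · -- [c] = bk b i forces i = 1 and c = b
      have hlen := congrArg List.length he
      simp at hlen
      rw [← hlen] at he
      simpa using he
    · -- [c] = bk b x ++ a :: bk b y forces x = y = 0 and c = a, contradiction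
      have hlen := congrArg List.length he
      simp at hlen
      obtain ⟨rfl, rfl⟩ : x = 0 ∧ y = 0 := by omega
      simp at he
      exact absurd (he ▸ hqc) (hqa q₁)
    · have hlen := congrArg List.length he
      simp at hlen
      omega
  rw [hcb] at hqc
  clear hcb
  -- (4) every a-residual of p is stuck
  have hstuck : ∀ p', Step p a p' → stuck p' := by
    intro p' hs
    have h1' := h1 p' hs
    -- (i) no trace of p' contains an a
    have hnoa : ∀ σ ∈ traces p', σ.count a = 0 := by
      intro σ hσ
      by_contra hc
      have hσN : σ ∈ TNSet a b N := by
        rw [← traces_pN, ← h1']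
        obtain ⟨r₂, hr₂⟩ := hσ
        exact ⟨_, traceTo_parL q hr₂⟩
      have hσe : ∃ i, 1 ≤ i ∧ i ≤ N ∧ σ = bk b i ++ [a] := by
        rcases hσN with ⟨i, _, rfl⟩ | ⟨i, hi1, hiN, rfl⟩
        · exact absurd (count_bk hab i) hc
        · exact ⟨i, hi1, hiN, rfl⟩
      obtain ⟨i, hi1, hiN, rfl⟩ := hσe
      -- the word (a :: σ) ++ [b] is a trace of p ‖ q with two a's not ending in a
      obtain ⟨r₂, hr₂⟩ := hσ
      have hw : ((a :: (bk b i ++ [a])) ++ [b]) ∈ traces (Proc.par p q) := by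
        refine ⟨_, traceTo_par_of_merge (merge_append _ _) (.step hs hr₂)
          (traceTo_single_of_step hqc)⟩
      rcases hL _ hw with ⟨j, _, he⟩ | ⟨x, y, _, he⟩ | ⟨x, y, _, _, he⟩
      · have := congrArg (List.count a) he
        rw [count_bk hab] at this
        simp [List.count_append, List.count_cons, count_bk hab] at this
      · have := congrArg (List.count a) he
        rw [count_word2 hab] at this
        simp [List.count_append, List.count_cons, count_bk hab] at this
      · -- compare last letters: b vs a
        have he2 : (a :: (bk b i ++ [a])) ++ [b] = (bk b x ++ a :: bk b y) ++ [a] := by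
          rw [he]; simp
        have e1 := congrArg List.getLast? he2
        rw [List.getLast?_concat, List.getLast?_concat] at e1
        exact hab (Option.some.inj e1).symm
    -- (ii) p' is stuck
    intro c' r hstep
    -- c' = b
    have hc'b : c' = b := by
      have hmem : [c'] ∈ TNSet a b N := by
        rw [← traces_pN, ← h1']
        exact ⟨_, traceTo_parL q (traceTo_single_of_step hstep)⟩
      rcases hmem with ⟨i, _, he⟩ | ⟨i, hi1, _, he⟩
      · have hlen := congrArg List.length he
        simp at hlen
        rw [← hlen] at he
        simpa using he
      · have hlen := congrArg List.length he
        simp at hlen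
        omega
    rw [hc'b] at hstep
    clear hc'b
    -- b^N ++ [a] is a trace of p' ‖ q, the a must come from q
    have hwN : (bk b N ++ [a]) ∈ traces (Proc.par p' q) := by
      rw [h1', traces_pN]
      exact .inr ⟨N, hN1, le_refl N, rfl⟩
    obtain ⟨r₃, hr₃⟩ := hwN
    obtain ⟨x₁, y₁, σ, τ, rfl, hA, hB, hm⟩ := traceTo_par_inv hr₃
    have hσ0 : σ.count a = 0 := hnoa σ ⟨x₁, hA⟩
    have hτ1 : τ.count a = 1 := by
      have := hm.count a
      rw [hσ0] at this
      simp [List.count_append, List.count_cons, count_bk hab] at this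
      omega
    -- τ ∈ traces q, shape b^x a b^y
    have hτL : τ ∈ traces (Proc.par p q) := ⟨_, traceTo_parR p hB⟩
    have hτe : ∃ x y, τ = bk b x ++ a :: bk b y := by
      rcases hL _ hτL with ⟨i, _, rfl⟩ | ⟨x, y, _, rfl⟩ | ⟨x, y, _, _, rfl⟩
      · rw [count_bk hab] at hτ1; omega
      · exact ⟨x, y, rfl⟩
      · rw [count_word3 hab] at hτ1; omega
    obtain ⟨x, y, rfl⟩ := hτe
    -- then τ ++ [b] ∈ traces(p' ‖ q) = traces pN : contradiction
    have hw2 : ((bk b x ++ a :: bk b y) ++ [b]) ∈ TNSet a b N := by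
      rw [← traces_pN, ← h1']
      exact ⟨_, traceTo_trans (traceTo_parR p' hB) (traceTo_parL y₁ (traceTo_single_of_step hstep))⟩
    rcases hw2 with ⟨i, _, he⟩ | ⟨i, _, _, he⟩
    · have := congrArg (List.count a) he
      rw [count_bk hab] at this
      simp [List.count_append, List.count_cons, count_bk hab] at this
    · have e1 := congrArg List.getLast? he
      rw [List.getLast?_concat, List.getLast?_concat] at e1
      exact hab (Option.some.inj e1).symm
  -- (5) traces q = traces pN
  have hq_tr : traces q = traces (pN a b N) := by
    rw [← traces_par_stuckL (hstuck p₀ hp₀), h1 p₀ hp₀]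
  -- helper: q can perform b^N ++ [a]
  have hqbNa : (bk b N ++ [a]) ∈ traces q := by
    rw [hq_tr, traces_pN]
    exact .inr ⟨N, hN1, le_refl N, rfl⟩
  -- (6) every trace of p is [] or [a]
  have hp_sh : ∀ σ ∈ traces p, σ = [] ∨ σ = [a] := by
    intro σ hσ
    have hσL : σ ∈ traces (Proc.par p q) := by
      obtain ⟨r₂, hr₂⟩ := hσ
      exact ⟨_, traceTo_parL q hr₂⟩
    obtain ⟨rp, hrp⟩ := hσ
    obtain ⟨rq, hrq⟩ := hqbNa
    rcases hL _ hσL with ⟨i, _, rfl⟩ | ⟨x, y, _, rfl⟩ | ⟨x, y, _, _, rfl⟩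
    · -- σ = b^i ; if i ≥ 1 then (b^N ++ [a]) ++ b^i is a trace of p ‖ q : impossible
      rcases Nat.eq_zero_or_pos i with rfl | hipos
      · left; rfl
      · exfalso
        have hw : ((bk b N ++ [a]) ++ bk b i) ∈ traces (Proc.par p q) :=
          ⟨_, traceTo_par_of_merge (merge_append _ _).comm hrp hrq⟩
        rcases hL _ hw with ⟨j, _, he⟩ | ⟨x, y, hxy, he⟩ | ⟨x, y, _, _, he⟩
        · have := congrArg (List.count a) he
          rw [count_bk hab] at this
          simp [List.count_append, List.count_cons, count_bk hab] at this
        · -- (b^N ++ [a]) ++ b^i = b^x ++ a :: b^y forces x = N, y = i, x+y ≤ N: contra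
          have he' : bk b N ++ a :: bk b i = bk b x ++ a :: bk b y := by
            rw [← he]; simp
          obtain ⟨hx, hy⟩ := first_occ_split he' (count_bk hab N) (count_bk hab x)
          have : N = x := bk_injective hx
          have : i = y := bk_injective hy
          omega
        · have := congrArg (List.count a) he
          rw [count_word3 hab] at this
          simp [List.count_append, List.count_cons, count_bk hab] at this
    · -- σ = b^x ++ a :: b^y : show σ = [a]
      right
      have hw : ((bk b N ++ [a]) ++ (bk b x ++ a :: bk b y)) ∈ traces (Proc.par p q) :=
        ⟨_, traceTo_par_of_merge (merge_append _ _).comm hrp hrq⟩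
      rcases hL _ hw with ⟨j, _, he⟩ | ⟨x', y', _, he⟩ | ⟨x', y', _, hxy', he⟩
      · exfalso
        have := congrArg (List.count a) he
        rw [count_bk hab] at this
        simp [List.count_append, List.count_cons, count_bk hab] at this
      · exfalso
        have := congrArg (List.count a) he
        rw [count_word2 hab] at this
        simp [List.count_append, List.count_cons, count_bk hab] at this
      · -- first-occurrence split
        have he' : bk b N ++ a :: (bk b x ++ a :: bk b y)
            = bk b x' ++ a :: (bk b y' ++ [a]) := by
          rw [← he]; simp
        obtain ⟨hx, hy⟩ := first_occ_split he' (count_bk hab N) (count_bk hab x')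
        have hNx' : N = x' := bk_injective hx
        have hy'0 : y' = 0 := by omega
        subst hy'0
        simp only [bk, List.replicate_zero, List.nil_append] at hy
        have hlen := congrArg List.length hy
        simp [List.length_append] at hlen
        obtain ⟨rfl, rfl⟩ : x = 0 ∧ y = 0 := by omega
        simp
    · -- σ = b^x ++ a :: (b^y ++ [a]) : impossible
      exfalso
      have hw : ((bk b x ++ a :: (bk b y ++ [a])) ++ [b]) ∈ traces (Proc.par p q) :=
        ⟨_, traceTo_par_of_merge (merge_append _ _) hrp (traceTo_single_of_step hqc)⟩
      rcases hL _ hw with ⟨j, _, he⟩ | ⟨x', y', _, he⟩ | ⟨x', y', _, _, he⟩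
      · have := congrArg (List.count a) he
        rw [count_bk hab] at this
        simp [List.count_append, List.count_cons, count_bk hab] at this
      · have := congrArg (List.count a) he
        rw [count_word2 hab] at this
        simp [List.count_append, List.count_cons, count_bk hab] at this
      · have he2 : (bk b x ++ a :: (bk b y ++ [a])) ++ [b]
            = (bk b x' ++ a :: bk b y') ++ [a] := by
          rw [he]; simp
        have e1 := congrArg List.getLast? he2
        rw [List.getLast?_concat, List.getLast?_concat] at e1
        exact hab (Option.some.inj e1).symm
  have hpa_mem : [a] ∈ traces p := ⟨p₀, traceTo_single_of_step hp₀⟩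
  -- (7) traces p = traces (a.0)
  have htp : traces p = traces (Proc.pre a Proc.nil) := by
    ext σ
    constructor
    · intro hσ
      rcases hp_sh σ hσ with rfl | rfl
      · exact mem_traces_nil _
      · exact mem_a_pre_a_nil
    · intro hσ
      rcases pre_a_nil_traces_shape (b := b) hσ with rfl | rfl
      · exact mem_traces_nil _
      · exact hpa_mem
  -- (8) PFEquiv p (a.0)
  have hp_pf : PFEquiv p (Proc.pre a Proc.nil) := by
    apply Set.eq_of_subset_of_subset
    · rintro ⟨w, X⟩ ⟨r, ht, hX⟩
      rcases hp_sh w ⟨r, ht⟩ with rfl | rfl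
      · have hr : r = p := traceTo_nil_eq ht
        subst hr
        exact ⟨Proc.pre a Proc.nil, .refl _, hX.trans htp⟩
      · -- residual after [a] has only the empty trace
        have hrt : traces r = traces (Proc.nil : Proc A) := by
          rw [traces_nil_eq]
          ext σ
          constructor
          · rintro ⟨r₂, hr₂⟩
            have : (a :: σ) ∈ traces p := ⟨r₂, traceTo_trans ht hr₂⟩
            rcases hp_sh _ this with he | he
            · simp at he
            · simpa using he
          · rintro rfl
            exact mem_traces_nil _
        exact ⟨Proc.nil, traceTo_single_of_step (Step.pre a _), hX.trans hrt⟩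
    · rintro ⟨w, X⟩ ⟨r, ht, hX⟩
      rcases bpow_trace_inv (a := a) (b := b) (k := 0) ht with ⟨i, hi, rfl, rfl⟩ | ⟨rfl, rfl⟩
      · interval_cases i
        exact ⟨p, .refl p, hX.trans htp.symm⟩
      · refine ⟨p₀, traceTo_single_of_step hp₀, hX.trans ?_⟩
        rw [traces_nil_eq, stuck_traces (hstuck p₀ hp₀)]
  -- helper trace-set computations
  have hparp : ∀ y : Proc A, traces (Proc.par p y) = aIns a (traces y) :=
    fun y => traces_par_aIns hp_sh hpa_mem
  have hpara0 : ∀ y : Proc A, traces (Proc.par (Proc.pre a Proc.nil) y) = aIns a (traces y) :=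
    fun y => traces_par_aIns (fun σ hσ => pre_a_nil_traces_shape (b := b) hσ) mem_a_pre_a_nil
  -- key lemma: residuals of q after b^i
  have KeyQ : ∀ {i : ℕ} {r : Proc A}, 1 ≤ i → TraceTo q (bk b i) r →
      ∃ k, k ≤ N - i ∧ traces r = PkSet a b k := by
    intro i r hi1 ht
    obtain ⟨r', ht', he⟩ := pf_elim h (traceTo_parR p ht)
    obtain ⟨x₁, y₁, σ, τ, rfl, hA, hB, hm⟩ := traceTo_par_inv ht'
    have hσnil : σ = [] := by
      rcases pre_a_nil_traces_shape (b := b) ⟨x₁, hA⟩ with rfl | rfl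
      · rfl
      · exfalso
        have := hm.count a
        rw [count_bk hab] at this
        simp [List.count_cons] at this
        omega
    subst hσnil
    have hx₁ : x₁ = Proc.pre a Proc.nil := traceTo_nil_eq hA
    subst hx₁
    have hτ : bk b i = τ := hm.nil_left
    rw [← hτ] at hB
    rcases pN_trace_inv hB with ⟨he1, _⟩ | ⟨i', k, _, hi'N, hk, he1, rfl⟩ | ⟨i', _, _, he1, rfl⟩
    · exact absurd he1 (bk_ne_nil_of_pos hi1)
    · have : i = i' := bk_injective he1
      subst this
      refine ⟨k, hk, ?_⟩
      rw [hparp r, hpara0 (bpow a b k), traces_bpow] at he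
      exact aIns_cancel hab he
    · exfalso
      have := congrArg (List.count a) he1
      rw [count_bk hab] at this
      simp [List.count_append, List.count_cons, count_bk hab] at this
  -- key lemma: realisation of all residual trace sets
  have KeyR : ∀ {i k : ℕ}, 1 ≤ i → i ≤ N → k ≤ N - i →
      ∃ q₁, TraceTo q (bk b i) q₁ ∧ traces q₁ = PkSet a b k := by
    intro i k hi1 hiN hk
    have hTr : TraceTo (Proc.par (Proc.pre a Proc.nil) (pN a b N)) (bk b i)
        (Proc.par (Proc.pre a Proc.nil) (bpow a b k)) :=
      traceTo_parR _ (pN_trace_bk a b hi1 hiN hk)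
    obtain ⟨r', ht', he⟩ := pf_elim h.symm hTr
    obtain ⟨x₁, y₁, σ, τ, rfl, hA, hB, hm⟩ := traceTo_par_inv ht'
    have hσnil : σ = [] := by
      rcases hp_sh σ ⟨x₁, hA⟩ with rfl | rfl
      · rfl
      · exfalso
        have := hm.count a
        rw [count_bk hab] at this
        simp [List.count_cons] at this
        omega
    subst hσnil
    have hx₁ : x₁ = p := traceTo_nil_eq hA
    subst hx₁
    have hτ : bk b i = τ := hm.nil_left
    rw [← hτ] at hB
    refine ⟨y₁, hB, ?_⟩
    rw [hpara0 (bpow a b k), traces_bpow, hparp y₁] at he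
    exact aIns_cancel hab he.symm
  -- key lemma: residuals of q after b^i ++ [a] have only the empty trace
  have KeyA : ∀ {i : ℕ} {r : Proc A}, 1 ≤ i → TraceTo q (bk b i ++ [a]) r →
      traces r = {([] : List A)} := by
    intro i r hi1 ht
    obtain ⟨qm, hql, hqr⟩ := traceTo_append_split ht
    obtain ⟨k, hk, hqm⟩ := KeyQ hi1 hql
    have hstep : Step qm a r := traceTo_single hqr
    ext σ
    constructor
    · rintro ⟨r₂, hr₂⟩
      have hmem : (a :: σ) ∈ PkSet a b k := by
        rw [← hqm]
        exact ⟨r₂, .step hstep hr₂⟩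
      rcases hmem with ⟨j, _, he⟩ | he
      · exfalso
        have := congrArg (List.count a) he
        rw [count_bk hab] at this
        simp [List.count_cons] at this
      · rcases k with _ | k'
        · simpa using he
        · exfalso
          simp only [bk, List.replicate_succ, List.cons_append, List.cons.injEq] at he
          exact hab he.1
    · rintro rfl
      exact mem_traces_nil _
  -- (9) PFEquiv q (pN a b N)
  have hq_pf : PFEquiv q (pN a b N) := by
    apply Set.eq_of_subset_of_subset
    · rintro ⟨w, X⟩ ⟨r, ht, hX⟩
      have hw : w ∈ TNSet a b N := by
        rw [← traces_pN, ← hq_tr]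
        exact ⟨r, ht⟩
      rcases hw with ⟨i, hiN, rfl⟩ | ⟨i, hi1, hiN, rfl⟩
      · rcases Nat.eq_zero_or_pos i with rfl | hipos
        · have hr : r = q := traceTo_nil_eq ht
          subst hr
          exact ⟨pN a b N, .refl _, hX.trans hq_tr⟩
        · obtain ⟨k, hk, hrk⟩ := KeyQ hipos ht
          refine ⟨bpow a b k, pN_trace_bk a b hipos hiN hk, ?_⟩
          rw [traces_bpow]
          exact hX.trans hrk
      · refine ⟨Proc.nil, pN_trace_full a b hi1 hiN, ?_⟩
        rw [traces_nil_eq]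
        exact hX.trans (KeyA hi1 ht)
    · rintro ⟨w, X⟩ ⟨r, ht, hX⟩
      rcases pN_trace_inv ht with ⟨rfl, rfl⟩ | ⟨i, k, hi1, hiN, hk, rfl, rfl⟩ | ⟨i, hi1, hiN, rfl, rfl⟩
      · exact ⟨q, .refl q, hX.trans hq_tr.symm⟩
      · obtain ⟨q₁, hq₁, hq₁t⟩ := KeyR hi1 hiN hk
        refine ⟨q₁, hq₁, ?_⟩
        rw [hX, traces_bpow]
        exact hq₁t.symm
      · have hmem : (bk b i ++ [a]) ∈ traces q := by
          rw [hq_tr, traces_pN]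
          exact .inr ⟨i, hi1, hiN, rfl⟩
        obtain ⟨r', hr'⟩ := hmem
        refine ⟨r', hr', ?_⟩
        rw [hX, traces_nil_eq]
        exact (KeyA hi1 hr').symm
  exact ⟨hp_pf, hq_pf⟩

end Main
end PFdec


theorem pf_par_decomposition {A : Type} [Fintype A] [Nonempty A]
    (a b : A) (hab : a ≠ b) (N : ℕ) (hN : 1 < N) (p q : Proc A)
    (hp0 : ¬ NilEquiv p) (hq0 : ¬ NilEquiv q)
    (hp : noNilSummandFactor p) (hq : noNilSummandFactor q)
    (h : PFEquiv (Proc.par p q) (Proc.par (Proc.pre a Proc.nil) (pN a b N))) :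
    (PFEquiv p (Proc.pre a Proc.nil) ∧ PFEquiv q (pN a b N)) ∨
    (PFEquiv p (pN a b N) ∧ PFEquiv q (Proc.pre a Proc.nil)) := by
  classical
  have hstep : ∃ r, Step (Proc.par p q) a r := by
    have ht : TraceTo (Proc.par (Proc.pre a Proc.nil) (pN a b N)) [a]
        (Proc.par Proc.nil (pN a b N)) :=
      PFdec.traceTo_single_of_step (Step.parL _ (Step.pre a Proc.nil))
    obtain ⟨r', ht', -⟩ := PFdec.pf_elim h.symm ht
    exact ⟨r', PFdec.traceTo_single ht'⟩
  obtain ⟨r, hr⟩ := hstep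
  have hN1 : 1 ≤ N := le_of_lt hN
  cases hr with
  | parL _ s => exact .inl (PFdec.aux_main hab hN1 hq0 h ⟨_, s⟩)
  | parR _ s =>
    have h' : PFEquiv (Proc.par q p) (Proc.par (Proc.pre a Proc.nil) (pN a b N)) :=
      (PFdec.pf_par_comm q p).trans h
    have hres := PFdec.aux_main hab hN1 hp0 h' ⟨_, s⟩
    exact .inr ⟨hres.2, hres.1⟩
end

section
/- For every N ≥ 1 and distinct actions a, b, the equation e_N: a.0 ‖ p_N ≈ a.p_N + Σ_{i=1}^N b.(a.0 ‖ b^{i-1}a) is sound for bisimilarity, where p_N = Σ_{i=1}^N b^i.a. -/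
lemma step_listSum_iff {A : Type} {l : List (Proc A)} {c : A} {r : Proc A} :
    Step (listSum l) c r ↔ ∃ t ∈ l, Step t c r := by
  induction l with
  | nil =>
    simp only [listSum]
    constructor
    · intro h; cases h
    · rintro ⟨t, ht, _⟩; simp at ht
  | cons t ts ih =>
    simp only [listSum]
    constructor
    · intro h
      cases h with
      | addL _ h => exact ⟨t, List.mem_cons_self, h⟩
      | addR _ h => obtain ⟨u, hu, hs⟩ := ih.mp h; exact ⟨u, List.mem_cons_of_mem _ hu, hs⟩
    · rintro ⟨u, hu, hs⟩
      rcases List.mem_cons.mp hu with rfl | hu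
      · exact Step.addL _ hs
      · exact Step.addR _ (ih.mpr ⟨u, hu, hs⟩)

lemma step_pN {A : Type} {a b : A} {N : ℕ} {c : A} {r : Proc A}
    (h : Step (pN a b N) c r) : c = b ∧ ∃ i < N, r = bpow a b i := by
  rw [pN, step_listSum_iff] at h
  obtain ⟨t, ht, hs⟩ := h
  simp only [List.mem_map, List.mem_range] at ht
  obtain ⟨i, hi, rfl⟩ := ht
  cases hs
  exact ⟨rfl, i, hi, rfl⟩

lemma pN_step {A : Type} (a b : A) {N i : ℕ} (hi : i < N) :
    Step (pN a b N) b (bpow a b i) := by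
  rw [pN, step_listSum_iff]
  exact ⟨Proc.pre b (bpow a b i), List.mem_map.mpr ⟨i, List.mem_range.mpr hi, rfl⟩,
    Step.pre b _⟩

inductive BR {A : Type} (a b : A) (N : ℕ) : Proc A → Proc A → Prop where
  | id (p : Proc A) : BR a b N p p
  | nilpar (q : Proc A) : BR a b N (Proc.par Proc.nil q) q
  | nilpar' (q : Proc A) : BR a b N q (Proc.par Proc.nil q)
  | main : BR a b N (Proc.par (Proc.pre a Proc.nil) (pN a b N))
      (Proc.add (Proc.pre a (pN a b N))
        (listSum ((List.range N).map fun i =>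
          Proc.pre b (Proc.par (Proc.pre a Proc.nil) (bpow a b i)))))
  | main' : BR a b N (Proc.add (Proc.pre a (pN a b N))
      (listSum ((List.range N).map fun i =>
        Proc.pre b (Proc.par (Proc.pre a Proc.nil) (bpow a b i)))))
      (Proc.par (Proc.pre a Proc.nil) (pN a b N))

theorem eN_sound_bisim {A : Type} [Fintype A] [Nonempty A]
    (a b : A) (hab : a ≠ b) (N : ℕ) (hN : 1 ≤ N) :
    Bisim (Proc.par (Proc.pre a Proc.nil) (pN a b N))
      (Proc.add (Proc.pre a (pN a b N))
        (listSum ((List.range N).map fun i =>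
          Proc.pre b (Proc.par (Proc.pre a Proc.nil) (bpow a b i))))) := by
  refine ⟨BR a b N, ?_, ?_, BR.main⟩
  · intro x y h
    cases h with
    | id _ => exact BR.id _
    | nilpar _ => exact BR.nilpar' _
    | nilpar' _ => exact BR.nilpar _
    | main => exact BR.main'
    | main' => exact BR.main
  · intro p q hpq c p' hstep
    cases hpq with
    | id _ => exact ⟨p', hstep, BR.id p'⟩
    | nilpar _ =>
      cases hstep with
      | parL _ h => cases h
      | parR _ h => exact ⟨_, h, BR.nilpar _⟩
    | nilpar' _ => exact ⟨_, Step.parR _ hstep, BR.nilpar' _⟩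
    | main =>
      cases hstep with
      | parL _ h =>
        cases h
        exact ⟨pN a b N, Step.addL _ (Step.pre a _), BR.nilpar _⟩
      | parR _ h =>
        obtain ⟨hc, i, hi, rfl⟩ := step_pN h
        rw [hc]
        refine ⟨Proc.par (Proc.pre a Proc.nil) (bpow a b i), ?_, BR.id _⟩
        exact Step.addR _ (step_listSum_iff.mpr
          ⟨Proc.pre b (Proc.par (Proc.pre a Proc.nil) (bpow a b i)),
            List.mem_map.mpr ⟨i, List.mem_range.mpr hi, rfl⟩, Step.pre b _⟩)
    | main' =>
      cases hstep with
      | addL _ h =>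
        cases h
        exact ⟨Proc.par Proc.nil (pN a b N), Step.parL _ (Step.pre a _), BR.nilpar' _⟩
      | addR _ h =>
        obtain ⟨t, ht, hs⟩ := step_listSum_iff.mp h
        simp only [List.mem_map, List.mem_range] at ht
        obtain ⟨i, hi, rfl⟩ := ht
        cases hs
        exact ⟨_, Step.parR _ (pN_step a b hi), BR.id _⟩
end
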